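/- arXiv:1112.5530 — 5 statements merged into one kernel-verified Lean document; each statement's English description precedes it below -/
import Mathlib

section
/- Let G be a transitive subgroup of Sym(n) and H the stabilizer of the symbol 1 in G, so that left transversals of H in G (with identity) are sets containing exactly one element mapping 1 to each symbol. Then for left transversals T, L of H in G, a map σ : T → L is an isomorphism of the induced left loop structures if and only if there exists α ∈ Sym(n) with α(1) = 1 such that α T α^{-1} = L, and in that case σ is the restriction of conjugation by α to T. -/
/-- A left transversal (with identity) of the subgroup `H` inside the subgroup `K`:
`S ⊆ K`, `1 ∈ S`, and `S` contains exactly one representative of each left coset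
of `H` inside `K`. -/
def IsLeftTransversalIn {P : Type*} [Group P] (K H : Subgroup P) (S : Set P) : Prop :=
  (1 : P) ∈ S ∧ S ⊆ (K : Set P) ∧ ∀ g ∈ K, ∃! s, s ∈ S ∧ s⁻¹ * g ∈ H

/-- `σ` is an isomorphism of the induced left loop structures on left transversals
`T`, `L` of `H`. -/
def IsLeftIso {P : Type*} [Group P] (H : Subgroup P) (T L : Set P) (σ : P → P) : Prop :=
  Set.BijOn σ T L ∧ ∀ x ∈ T, ∀ y ∈ T, ∀ z ∈ T,
    z⁻¹ * (x * y) ∈ H → (σ z)⁻¹ * (σ x * σ y) ∈ H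

theorem transversal_iso_iff_conjugation {n : ℕ} [NeZero n]
    (G : Subgroup (Equiv.Perm (Fin n)))
    (htrans : ∀ i : Fin n, ∃ g ∈ G, g 0 = i)
    (H : Subgroup (Equiv.Perm (Fin n)))
    (hH : H = G ⊓ MulAction.stabilizer (Equiv.Perm (Fin n)) (0 : Fin n))
    (T L : Set (Equiv.Perm (Fin n)))
    (hT : IsLeftTransversalIn G H T) (hL : IsLeftTransversalIn G H L)
    (σ : Equiv.Perm (Fin n) → Equiv.Perm (Fin n)) :
    IsLeftIso H T L σ ↔
      ∃ α : Equiv.Perm (Fin n), α 0 = 0 ∧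
        (fun g => α * g * α⁻¹) '' T = L ∧ ∀ x ∈ T, σ x = α * x * α⁻¹ := by
  classical
  have hHmem : ∀ g : Equiv.Perm (Fin n), g ∈ H ↔ g ∈ G ∧ g 0 = 0 := by
    intro g
    rw [hH, Subgroup.mem_inf, MulAction.mem_stabilizer_iff]
    rfl
  have hcond : ∀ s g : Equiv.Perm (Fin n), s ∈ G → g ∈ G →
      (s⁻¹ * g ∈ H ↔ g 0 = s 0) := by
    intro s g hs hg
    rw [hHmem]
    constructor
    · rintro ⟨-, h⟩
      have := congrArg s h
      simpa [Equiv.Perm.mul_apply] using this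
    · intro h
      exact ⟨mul_mem (inv_mem hs) hg, by simp [Equiv.Perm.mul_apply, h]⟩
  have key : ∀ S : Set (Equiv.Perm (Fin n)), IsLeftTransversalIn G H S →
      ∀ i : Fin n, ∃! s, s ∈ S ∧ s 0 = i := by
    intro S hS i
    obtain ⟨g, hg, hg0⟩ := htrans i
    obtain ⟨s, ⟨hsS, hsH⟩, hu⟩ := hS.2.2 g hg
    rw [hcond s g (hS.2.1 hsS) hg] at hsH
    refine ⟨s, ⟨hsS, hsH ▸ hg0⟩, ?_⟩
    rintro y ⟨hyS, hy0⟩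
    exact hu y ⟨hyS, (hcond y g (hS.2.1 hyS) hg).mpr (hg0.trans hy0.symm)⟩
  have keyT := key T hT
  have keyL := key L hL
  obtain ⟨hT1, hTG, -⟩ := hT
  obtain ⟨hL1, hLG, -⟩ := hL
  choose tT htTmem htT0 using fun i => (keyT i).exists
  have tTu : ∀ s, s ∈ T → s = tT (s 0) := fun s hs =>
    (keyT (s 0)).unique ⟨hs, rfl⟩ ⟨htTmem _, htT0 _⟩
  have Lu : ∀ a ∈ L, ∀ b ∈ L, a 0 = b 0 → a = b := fun a ha b hb h =>
    (keyL (b 0)).unique ⟨ha, h⟩ ⟨hb, rfl⟩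
  constructor
  · rintro ⟨hbij, hmul⟩
    have hσ1 : σ 1 = 1 := by
      have h1 : (1 : Equiv.Perm (Fin n))⁻¹ * (1 * 1) ∈ H := by
        simpa using one_mem H
      have h2 := hmul 1 hT1 1 hT1 1 hT1 h1
      have h3 : σ 1 ∈ H := by
        have he : (σ 1)⁻¹ * (σ 1 * σ 1) = σ 1 := by group
        rwa [he] at h2
      refine Lu (σ 1) (hbij.mapsTo hT1) 1 hL1 ?_
      simpa using ((hHmem _).mp h3).2
    set αf : Fin n → Fin n := fun i => σ (tT i) 0 with hαf
    have hinj : Function.Injective αf := by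
      intro i j hij
      have h1 : σ (tT i) = σ (tT j) :=
        Lu _ (hbij.mapsTo (htTmem i)) _ (hbij.mapsTo (htTmem j)) hij
      have h2 := hbij.injOn (htTmem i) (htTmem j) h1
      rw [← htT0 i, ← htT0 j, h2]
    have hsurj : Function.Surjective αf := by
      intro k
      obtain ⟨l, hl, hl0⟩ := (keyL k).exists
      obtain ⟨t, ht, hσt⟩ := hbij.surjOn hl
      refine ⟨t 0, ?_⟩
      have h : tT (t 0) = t := (tTu t ht).symm
      simp only [hαf, h, hσt, hl0]
    set α : Equiv.Perm (Fin n) := Equiv.ofBijective αf ⟨hinj, hsurj⟩ with hα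
    have hαap : ∀ i, α i = αf i := fun i => rfl
    have main : ∀ t ∈ T, ∀ i : Fin n, σ t (α i) = α (t i) := by
      intro t ht i
      have hzH : (tT (t i))⁻¹ * (t * tT i) ∈ H := by
        refine (hcond _ _ (hTG (htTmem _)) (mul_mem (hTG ht) (hTG (htTmem i)))).mpr ?_
        simp [Equiv.Perm.mul_apply, htT0 i, htT0 (t i)]
      have h2 := hmul t ht (tT i) (htTmem i) (tT (t i)) (htTmem _) hzH
      have h3 := ((hHmem _).mp h2).2
      have h4 : σ t (σ (tT i) 0) = σ (tT (t i)) 0 := by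
        have := congrArg (σ (tT (t i))) h3
        simpa [Equiv.Perm.mul_apply] using this
      simpa [hαap, hαf] using h4
    have heq : ∀ t ∈ T, α * t * α⁻¹ = σ t := by
      intro t ht
      ext j
      have h := main t ht (α⁻¹ j)
      rw [show α (α⁻¹ j) = j from α.apply_symm_apply j] at h
      simp only [Equiv.Perm.mul_apply]
      exact congrArg Fin.val h.symm
    refine ⟨α, ?_, ?_, fun x hx => (heq x hx).symm⟩
    · have h1 : (1 : Equiv.Perm (Fin n)) = tT 0 := (keyT 0).unique ⟨hT1, by simp⟩ ⟨htTmem 0, htT0 0⟩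
      have : α 0 = αf 0 := rfl
      rw [this, hαf]
      simp [← h1, hσ1]
    · rw [Set.image_congr heq, hbij.image_eq]
  · rintro ⟨α, hα0, himg, hσ⟩
    have hc : Function.Injective (fun g : Equiv.Perm (Fin n) => α * g * α⁻¹) := by
      intro a b h
      simpa using mul_left_cancel (mul_right_cancel h)
    have hmemL : ∀ x ∈ T, α * x * α⁻¹ ∈ L := by
      intro x hx
      rw [← himg]
      exact ⟨x, hx, rfl⟩
    constructor
    · have hbc : Set.BijOn (fun g => α * g * α⁻¹) T L := by
        rw [← himg]
        exact hc.injOn.bijOn_image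
      exact hbc.congr fun x hx => (hσ x hx).symm
    · intro x hx y hy z hz hzH
      rw [hσ x hx, hσ y hy, hσ z hz, hHmem]
      rw [hHmem] at hzH
      obtain ⟨hGmem, h0⟩ := hzH
      refine ⟨mul_mem (inv_mem (hLG (hmemL z hz)))
        (mul_mem (hLG (hmemL x hx)) (hLG (hmemL y hy))), ?_⟩
      have hprod : (α * z * α⁻¹)⁻¹ * (α * x * α⁻¹ * (α * y * α⁻¹)) =
          α * (z⁻¹ * (x * y)) * α⁻¹ := by group
      rw [hprod]
      have h1 : α⁻¹ 0 = 0 := by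
        apply α.injective
        rw [show α (α⁻¹ 0) = 0 from α.apply_symm_apply 0, hα0]
      simp only [Equiv.Perm.mul_apply] at h0 ⊢
      rw [h1, h0, hα0]
end

section
/- Let G be a transitive subgroup of Sym(n) with H = Stab_G(1), and suppose every left transversal (containing the identity) of H in G generates G. Let K = {α ∈ Sym(n) : α(1)=1 and there exist left transversals T, L of H in G with α T α^{-1} = L}. Then K = N_{Sym(n-1)}(G), the set of permutations fixing 1 that normalize G. -/
lemma exists_transversal {P : Type*} [Group P] (G H : Subgroup P) (hle : H ≤ G) :
    ∃ T, IsLeftTransversalIn G H T := by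
  classical
  let f : P → P := fun g => if g ∈ H then 1 else (QuotientGroup.mk g : P ⧸ H).out
  have hmk : ∀ g : P, QuotientGroup.mk (f g) = (QuotientGroup.mk g : P ⧸ H) := by
    intro g
    by_cases hg : g ∈ H
    · simp only [f, if_pos hg]
      rw [QuotientGroup.eq]
      simpa using hg
    · simp only [f, if_neg hg, Quotient.out_eq]
  have hconst : ∀ g g' : P, (QuotientGroup.mk g : P ⧸ H) = QuotientGroup.mk g' → f g = f g' := by
    intro g g' h
    have : g ∈ H ↔ g' ∈ H := by
      rw [QuotientGroup.eq] at h
      constructor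
      · intro hg; have := H.mul_mem hg h; simpa [mul_assoc] using this
      · intro hg'; have := H.mul_mem hg' (H.inv_mem h); simpa [mul_assoc] using this
    by_cases hg : g ∈ H
    · simp [f, if_pos hg, if_pos (this.mp hg)]
    · simp [f, if_neg hg, if_neg (fun hg' => hg (this.mpr hg')), h]
  have hmem : ∀ g : P, g⁻¹ * f g ∈ H := by
    intro g
    have := hmk g
    rw [QuotientGroup.eq] at this
    have := H.inv_mem this
    simpa using this
  refine ⟨f '' G, ⟨⟨1, G.one_mem, by simp [f, H.one_mem]⟩, ?_, ?_⟩⟩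
  · rintro _ ⟨g, hg, rfl⟩
    have : f g = g * (g⁻¹ * f g) := by group
    rw [this]
    exact G.mul_mem hg (hle (hmem g))
  · intro g hg
    refine ⟨f g, ⟨⟨g, hg, rfl⟩, ?_⟩, ?_⟩
    · have := hmem g
      have h2 := H.inv_mem this
      simpa using h2
    · rintro s ⟨⟨g', hg', rfl⟩, hs⟩
      apply hconst
      rw [← hmk g', QuotientGroup.eq]
      exact hs

lemma transversal_conj {P : Type*} [Group P] (G H : Subgroup P) (α : P)
    (hG : ∀ g, g ∈ G ↔ α * g * α⁻¹ ∈ G) (hHc : ∀ h, h ∈ H ↔ α * h * α⁻¹ ∈ H)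
    {T : Set P} (hT : IsLeftTransversalIn G H T) :
    IsLeftTransversalIn G H ((fun g => α * g * α⁻¹) '' T) := by
  obtain ⟨h1, hsub, huniq⟩ := hT
  refine ⟨⟨1, h1, by group⟩, ?_, ?_⟩
  · rintro _ ⟨s, hs, rfl⟩
    exact (hG s).mp (hsub hs)
  · intro g hg
    have hg' : α⁻¹ * g * α ∈ G := by
      have := (hG (α⁻¹ * g * α)).mpr
      simp only [show α * (α⁻¹ * g * α) * α⁻¹ = g by group] at this
      exact this hg
    obtain ⟨s, ⟨hsT, hsH⟩, hu⟩ := huniq _ hg'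
    refine ⟨α * s * α⁻¹, ⟨⟨s, hsT, rfl⟩, ?_⟩, ?_⟩
    · have := (hHc _).mp hsH
      simpa [show α * (s⁻¹ * (α⁻¹ * g * α)) * α⁻¹ = (α * s * α⁻¹)⁻¹ * g by group] using this
    · rintro t ⟨⟨s', hs', rfl⟩, ht⟩
      have : s'⁻¹ * (α⁻¹ * g * α) ∈ H := by
        have := (hHc (s'⁻¹ * (α⁻¹ * g * α))).mpr
        simp only [show α * (s'⁻¹ * (α⁻¹ * g * α)) * α⁻¹ = (α * s' * α⁻¹)⁻¹ * g by group] at this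
        exact this ht
      rw [hu s' ⟨hs', this⟩]

theorem K_eq_normalizer_of_transversals_generate {n : ℕ} [NeZero n]
    (G : Subgroup (Equiv.Perm (Fin n)))
    (htrans : ∀ i : Fin n, ∃ g ∈ G, g 0 = i)
    (H : Subgroup (Equiv.Perm (Fin n)))
    (hH : H = G ⊓ MulAction.stabilizer (Equiv.Perm (Fin n)) (0 : Fin n))
    (hgen : ∀ T : Set (Equiv.Perm (Fin n)),
      IsLeftTransversalIn G H T → Subgroup.closure T = G) :
    {α : Equiv.Perm (Fin n) | α 0 = 0 ∧
        ∃ T L : Set (Equiv.Perm (Fin n)), IsLeftTransversalIn G H T ∧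
          IsLeftTransversalIn G H L ∧ (fun g => α * g * α⁻¹) '' T = L} =
      {α : Equiv.Perm (Fin n) | α 0 = 0 ∧ α ∈ Subgroup.normalizer (G : Set (Equiv.Perm (Fin n)))} := by
  have hHle : H ≤ G := by rw [hH]; exact inf_le_left
  ext α
  simp only [Set.mem_setOf_eq]
  constructor
  · rintro ⟨hα0, T, L, hT, hL, hTL⟩
    refine ⟨hα0, ?_⟩
    have hmap : Subgroup.map (MulAut.conj α).toMonoidHom G = G := by
      rw [← hgen T hT, MonoidHom.map_closure]
      have : (MulAut.conj α).toMonoidHom '' T = L := by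
        rw [← hTL]
        ext x
        simp [MulAut.conj_apply]
      rw [this, hgen L hL]
      exact (hgen T hT).symm
    rw [Subgroup.mem_normalizer_iff]
    intro h
    constructor
    · intro hh
      have : (MulAut.conj α).toMonoidHom h ∈ Subgroup.map (MulAut.conj α).toMonoidHom G :=
        Subgroup.mem_map_of_mem _ hh
      rw [hmap] at this
      simpa [MulAut.conj_apply] using this
    · intro hh
      have : α * h * α⁻¹ ∈ Subgroup.map (MulAut.conj α).toMonoidHom G := by rw [hmap]; exact hh
      obtain ⟨g, hg, hgeq⟩ := this
      simp only [MulEquiv.coe_toMonoidHom, MulAut.conj_apply] at hgeq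
      have h1 := mul_right_cancel hgeq
      have h2 : g = h := mul_left_cancel h1
      exact h2 ▸ hg
  · rintro ⟨hα0, hnorm⟩
    have hαinv0 : α⁻¹ 0 = 0 := by
      conv_lhs => rw [← hα0]
      simp
    have hG : ∀ g, g ∈ G ↔ α * g * α⁻¹ ∈ G := (Subgroup.mem_normalizer_iff.mp hnorm)
    have hHc : ∀ h, h ∈ H ↔ α * h * α⁻¹ ∈ H := by
      intro h
      rw [hH]
      simp only [Subgroup.mem_inf, MulAction.mem_stabilizer_iff, Equiv.Perm.smul_def]
      constructor
      · rintro ⟨hg, hs⟩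
        refine ⟨(hG h).mp hg, ?_⟩
        have : (α * h * α⁻¹) 0 = α (h (α⁻¹ 0)) := by simp [Equiv.Perm.mul_apply]
        rw [this, hαinv0]
        rw [hs, hα0]
      · rintro ⟨hg, hs⟩
        refine ⟨(hG h).mpr hg, ?_⟩
        have h2 : (α * h * α⁻¹) 0 = α (h 0) := by
          simp [Equiv.Perm.mul_apply, hαinv0]
        rw [h2] at hs
        have := congrArg (fun x => α⁻¹ x) hs
        simpa [hαinv0] using this
    obtain ⟨T, hT⟩ := exists_transversal G H hHle
    exact ⟨hα0, T, _, hT, transversal_conj G H α hG hHc hT, rfl⟩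
end

section
/- Let G be a transitive subgroup of Sym(n) with n ≥ 2, H = Stab_G(1) nontrivial. Then it is not the case that all left transversals of H in G are pairwise isomorphic as left loops; i.e., ict(G,H) ≠ 1. (Key arithmetic step: for a prime p dividing |H|, p^{n-1} does not divide (n-1)!.) -/
namespace IctAux

open Equiv Equiv.Perm

variable {n : ℕ}

/-- the stabilizer of `0` in the full symmetric group -/
abbrev Stab (n : ℕ) [NeZero n] : Subgroup (Perm (Fin n)) :=
  MulAction.stabilizer (Perm (Fin n)) (0 : Fin n)

lemma mem_Stab_iff [NeZero n] {g : Perm (Fin n)} : g ∈ Stab n ↔ g 0 = 0 := by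
  rw [MulAction.mem_stabilizer_iff, Perm.smul_def]

/-- conjugation relation on transversals -/
def Conj [NeZero n] (T L : Set (Perm (Fin n))) : Prop :=
  ∃ f : Perm (Fin n), f 0 = 0 ∧ ∀ t ∈ T, f * t * f⁻¹ ∈ L

section basic

variable [NeZero n] {G : Subgroup (Perm (Fin n))}

lemma mem_H_iff {g : Perm (Fin n)} (hg : g ∈ G) :
    g ∈ G ⊓ Stab n ↔ g 0 = 0 := by
  simp [Subgroup.mem_inf, hg, mem_Stab_iff]

/-- the "points" characterization of transversals -/
lemma trans_iff (S : Set (Perm (Fin n))) :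
    IsLeftTransversalIn G (G ⊓ Stab n) S ↔
      ((1 : Perm (Fin n)) ∈ S ∧ S ⊆ (G : Set (Perm (Fin n))) ∧
        ∀ g ∈ G, ∃! s, s ∈ S ∧ s 0 = g 0) := by
  constructor
  · rintro ⟨h1, hsub, hex⟩
    refine ⟨h1, hsub, fun g hg => ?_⟩
    obtain ⟨s, ⟨hsS, hsH⟩, huniq⟩ := hex g hg
    have hkey : ∀ t ∈ S, (t⁻¹ * g ∈ G ⊓ Stab n ↔ t 0 = g 0) := by
      intro t htS
      rw [mem_H_iff (by exact mul_mem (inv_mem (hsub htS)) hg)]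
      rw [Perm.mul_apply]
      constructor
      · intro h; have := congrArg t h; simpa using this.symm
      · intro h; rw [← h]; simp
    refine ⟨s, ⟨hsS, ((hkey s hsS).1 hsH)⟩, fun t ⟨htS, ht0⟩ => ?_⟩
    exact huniq t ⟨htS, (hkey t htS).2 ht0⟩
  · rintro ⟨h1, hsub, hex⟩
    refine ⟨h1, hsub, fun g hg => ?_⟩
    obtain ⟨s, ⟨hsS, hs0⟩, huniq⟩ := hex g hg
    have hkey : ∀ t ∈ S, (t⁻¹ * g ∈ G ⊓ Stab n ↔ t 0 = g 0) := by
      intro t htS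
      rw [mem_H_iff (by exact mul_mem (inv_mem (hsub htS)) hg)]
      rw [Perm.mul_apply]
      constructor
      · intro h; have := congrArg t h; simpa using this.symm
      · intro h; rw [← h]; simp
    refine ⟨s, ⟨hsS, (hkey s hsS).2 hs0⟩, fun t ⟨htS, htH⟩ => ?_⟩
    exact huniq t ⟨htS, (hkey t htS).1 htH⟩

variable (htrans : ∀ i : Fin n, ∃ g ∈ G, g 0 = i)

include htrans in
/-- for transitive `G`, the characterization is per point -/
lemma trans_iff' (S : Set (Perm (Fin n))) :
    IsLeftTransversalIn G (G ⊓ Stab n) S ↔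
      ((1 : Perm (Fin n)) ∈ S ∧ S ⊆ (G : Set (Perm (Fin n))) ∧
        ∀ i : Fin n, ∃! s, s ∈ S ∧ s 0 = i) := by
  rw [trans_iff]
  refine and_congr_right fun _ => and_congr_right fun _ => ⟨fun h i => ?_, fun h g hg => h (g 0)⟩
  obtain ⟨g, hgG, hg0⟩ := htrans i
  simpa [hg0] using h g hgG

end basic

section rep

variable [NeZero n] {S : Set (Perm (Fin n))}

/-- representative of the "coset" of point `i` in a transversal -/
noncomputable def rp (hS : ∀ i : Fin n, ∃! s, s ∈ S ∧ s 0 = i) (i : Fin n) : Perm (Fin n) :=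
  (hS i).exists.choose

lemma rp_mem (hS : ∀ i : Fin n, ∃! s, s ∈ S ∧ s 0 = i) (i : Fin n) : rp hS i ∈ S :=
  (hS i).exists.choose_spec.1

lemma rp_zero (hS : ∀ i : Fin n, ∃! s, s ∈ S ∧ s 0 = i) (i : Fin n) : (rp hS i) 0 = i :=
  (hS i).exists.choose_spec.2

lemma rp_uniq (hS : ∀ i : Fin n, ∃! s, s ∈ S ∧ s 0 = i) {i : Fin n} {s : Perm (Fin n)}
    (hs : s ∈ S) (h0 : s 0 = i) : s = rp hS i := by
  obtain ⟨t, ht, huniq⟩ := hS i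
  rw [huniq s ⟨hs, h0⟩]
  exact (huniq _ ⟨rp_mem hS i, rp_zero hS i⟩).symm

lemma rp_eq_self (hS : ∀ i : Fin n, ∃! s, s ∈ S ∧ s 0 = i) {s : Perm (Fin n)} (hs : s ∈ S) :
    s = rp hS (s 0) := rp_uniq hS hs rfl

/-- a transversal is in bijection with `Fin n` -/
lemma ncard_transversal (hS : ∀ i : Fin n, ∃! s, s ∈ S ∧ s 0 = i) : S.ncard = n := by
  have h : S = Set.range fun i => rp hS i := by
    ext s
    constructor
    · intro hs; exact ⟨s 0, (rp_eq_self hS hs).symm⟩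
    · rintro ⟨i, rfl⟩; exact rp_mem hS i
  have hinj : Function.Injective fun i => rp hS i := by
    intro i j hij
    have : (rp hS i) 0 = (rp hS j) 0 := by simp only [hij]
    rwa [rp_zero, rp_zero] at this
  rw [h, ← Set.image_univ, Set.ncard_image_of_injective _ hinj, Set.ncard_univ,
    Nat.card_eq_fintype_card, Fintype.card_fin]

end rep

section conj

variable [NeZero n]

lemma conj_refl (T : Set (Perm (Fin n))) : Conj T T :=
  ⟨1, by simp, fun t ht => by simpa using ht⟩

omit [NeZero n] in
lemma conj_map_inj (f : Perm (Fin n)) :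
    Function.Injective (fun t : Perm (Fin n) => f * t * f⁻¹) := by
  intro a b hab
  simpa using mul_left_cancel (mul_right_cancel hab)

lemma conj_image {T L : Set (Perm (Fin n))}
    (hT : ∀ i : Fin n, ∃! s, s ∈ T ∧ s 0 = i) (hL : ∀ i : Fin n, ∃! s, s ∈ L ∧ s 0 = i)
    {f : Perm (Fin n)} (h : ∀ t ∈ T, f * t * f⁻¹ ∈ L) :
    (fun t => f * t * f⁻¹) '' T = L := by
  apply Set.eq_of_subset_of_ncard_le
  · rintro _ ⟨t, ht, rfl⟩; exact h t ht
  · rw [Set.ncard_image_of_injective _ (conj_map_inj f), ncard_transversal hT,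
      ncard_transversal hL]
  · exact Set.toFinite L

lemma conj_symm {T L : Set (Perm (Fin n))}
    (hT : ∀ i : Fin n, ∃! s, s ∈ T ∧ s 0 = i) (hL : ∀ i : Fin n, ∃! s, s ∈ L ∧ s 0 = i)
    (hc : Conj T L) : Conj L T := by
  obtain ⟨f, hf0, hf⟩ := hc
  refine ⟨f⁻¹, by have h : f⁻¹ (f 0) = 0 := Equiv.symm_apply_apply f 0; rwa [hf0] at h, fun l hl => ?_⟩
  have : l ∈ (fun t => f * t * f⁻¹) '' T := by rw [conj_image hT hL hf]; exact hl
  obtain ⟨t, ht, rfl⟩ := this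
  have : f⁻¹ * (f * t * f⁻¹) * f⁻¹⁻¹ = t := by group
  rwa [this]

lemma conj_trans {T L M : Set (Perm (Fin n))} (h1 : Conj T L) (h2 : Conj L M) : Conj T M := by
  obtain ⟨f, hf0, hf⟩ := h1
  obtain ⟨g, hg0, hg⟩ := h2
  refine ⟨g * f, by rw [Perm.mul_apply, hf0, hg0], fun t ht => ?_⟩
  have : g * f * t * (g * f)⁻¹ = g * (f * t * f⁻¹) * g⁻¹ := by group
  rw [this]
  exact hg _ (hf t ht)

end conj

section iso

variable [NeZero n] {G : Subgroup (Perm (Fin n))}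

lemma iso_to_conj (htrans : ∀ i : Fin n, ∃ g ∈ G, g 0 = i)
    {T L : Set (Perm (Fin n))}
    (hT : IsLeftTransversalIn G (G ⊓ Stab n) T) (hL : IsLeftTransversalIn G (G ⊓ Stab n) L)
    {σ : Perm (Fin n) → Perm (Fin n)} (hσ : IsLeftIso (G ⊓ Stab n) T L σ) : Conj T L := by
  have hT' := ((trans_iff' htrans T).1 hT).2.2
  have hL' := ((trans_iff' htrans L).1 hL).2.2
  have h1T : (1 : Perm (Fin n)) ∈ T := hT.1
  set φ : Fin n → Fin n := fun i => σ (rp hT' i) 0 with hφ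
  have hσL : ∀ t ∈ T, σ t ∈ L := fun t ht => hσ.1.mapsTo ht
  have hσrp : ∀ i, σ (rp hT' i) = rp hL' (φ i) := fun i =>
    rp_eq_self hL' (hσL _ (rp_mem hT' i))
  have hinj : Function.Injective φ := by
    intro i j hij
    have h2 : σ (rp hT' i) = σ (rp hT' j) := by
      rw [hσrp i, hσrp j, hij]
    have h3 : rp hT' i = rp hT' j := hσ.1.injOn (rp_mem hT' i) (rp_mem hT' j) h2
    have := congrArg (fun s : Perm (Fin n) => s 0) h3
    simpa [rp_zero] using this
  have hbij := Finite.injective_iff_bijective.1 hinj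
  set f : Perm (Fin n) := Equiv.ofBijective φ hbij with hfdef
  have hfapp : ∀ i, f i = φ i := fun i => rfl
  -- σ 1 fixes 0
  have hσ1 : σ 1 ∈ G ⊓ Stab n := by
    have := hσ.2 1 h1T 1 h1T 1 h1T (by simpa using (one_mem (G ⊓ Stab n)))
    simpa using this
  have hrp0 : rp hT' 0 = 1 := (rp_uniq hT' h1T (by simp)).symm
  have hf0 : f 0 = 0 := by
    rw [hfapp, hφ]
    simp only [hrp0]
    exact mem_Stab_iff.1 ((Subgroup.mem_inf.1 hσ1).2)
  -- the key commutation property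
  have hkey : ∀ t ∈ T, ∀ j : Fin n, φ (t j) = σ t (φ j) := by
    intro t ht j
    set y := rp hT' j with hy
    have hyT : y ∈ T := rp_mem hT' j
    have hy0 : y 0 = j := rp_zero hT' j
    have htyG : t * y ∈ G := mul_mem (hT.2.1 ht) (hT.2.1 hyT)
    obtain ⟨z, ⟨hzT, hzH⟩, -⟩ := hT.2.2 (t * y) htyG
    have hz0 : z 0 = t j := by
      have h0 : (z⁻¹ * (t * y)) 0 = 0 := mem_Stab_iff.1 ((Subgroup.mem_inf.1 hzH).2)
      have : z ((z⁻¹ * (t * y)) 0) = z 0 := by rw [h0]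
      simpa [Perm.mul_apply, hy0] using this.symm
    have hzrp : z = rp hT' (t j) := rp_uniq hT' hzT hz0
    have hcond := hσ.2 t ht y hyT z hzT hzH
    have h0 : ((σ z)⁻¹ * (σ t * σ y)) 0 = 0 := mem_Stab_iff.1 ((Subgroup.mem_inf.1 hcond).2)
    have h1 : σ z (((σ z)⁻¹ * (σ t * σ y)) 0) = σ z 0 := by rw [h0]
    have h2 : σ t (σ y 0) = σ z 0 := by simpa [Perm.mul_apply] using h1
    rw [hφ]
    simp only [← hy, ← hzrp]
    rw [← h2]
  have hconj : ∀ t ∈ T, f * t * f⁻¹ = σ t := by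
    intro t ht
    ext k
    have h1 : (f * t * f⁻¹) k = f (t (f⁻¹ k)) := rfl
    rw [h1, hfapp, hkey t ht (f⁻¹ k)]
    have h2 : φ (f⁻¹ k) = k := by rw [← hfapp]; exact Equiv.apply_symm_apply f k
    rw [h2]
  exact ⟨f, hf0, fun t ht => by rw [hconj t ht]; exact hσL t ht⟩

end iso

section arith

lemma sum_div_two_pow_le : ∀ m : ℕ, ∀ b : ℕ, (∑ i ∈ Finset.range b, m / 2 ^ (i + 1)) ≤ m - 1 := by
  intro m
  induction m using Nat.strong_induction_on with
  | _ m IH =>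
    intro b
    cases b with
    | zero => simp
    | succ b =>
      rw [Finset.sum_range_succ']
      have hterm : ∀ i : ℕ, m / 2 ^ (i + 1 + 1) = (m / 2) / 2 ^ (i + 1) := by
        intro i
        rw [Nat.div_div_eq_div_mul]
        congr 1
        ring
      simp only [hterm, pow_one]
      by_cases h0 : m / 2 = 0
      · simp [h0]
      · have hm : 0 < m := by
          rcases Nat.eq_zero_or_pos m with h | h
          · exfalso; apply h0; rw [h]
          · exact h
        have hlt : m / 2 < m := Nat.div_lt_self hm one_lt_two
        have h1 := IH (m / 2) hlt b
        have h2 := Nat.div_add_mod m 2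
        have h3 := Nat.mod_lt m (show 0 < 2 by norm_num)
        omega

lemma not_pow_dvd_factorial {p m : ℕ} (hp : p.Prime) (hm : 1 ≤ m) :
    ¬ p ^ m ∣ Nat.factorial m := by
  intro hdvd
  set b := Nat.log p m + 1 with hb
  rw [Nat.Prime.pow_dvd_factorial_iff hp (by omega : Nat.log p m < b)] at hdvd
  have h2 : (∑ i ∈ Finset.Ico 1 b, m / p ^ i) ≤ ∑ i ∈ Finset.Ico 1 b, m / 2 ^ i := by
    refine Finset.sum_le_sum fun i _ => ?_
    exact Nat.div_le_div_left (Nat.pow_le_pow_left hp.two_le i) (Nat.pow_pos (n := i) (by norm_num))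
  have h3 : (∑ i ∈ Finset.Ico 1 b, m / 2 ^ i) = ∑ i ∈ Finset.range (b - 1), m / 2 ^ (1 + i) := by
    rw [Finset.sum_Ico_eq_sum_range]
  have h4 : (∑ i ∈ Finset.range (b - 1), m / 2 ^ (1 + i)) ≤ m - 1 := by
    have := sum_div_two_pow_le m (b - 1)
    refine le_trans (le_of_eq ?_) this
    refine Finset.sum_congr rfl fun i _ => ?_
    rw [Nat.add_comm 1 i]
  omega

end arith

section cards

variable [NeZero n]

lemma card_stab : Nat.card (Stab n) = Nat.factorial (n - 1) := by
  classical
  have horb : MulAction.orbit (Perm (Fin n)) (0 : Fin n) = Set.univ := by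
    ext i
    simp only [Set.mem_univ, iff_true, MulAction.mem_orbit_iff]
    exact ⟨Equiv.swap 0 i, by simp [Perm.smul_def]⟩
  have hos := MulAction.card_orbit_mul_card_stabilizer_eq_card_group (G := Perm (Fin n))
    (X := Fin n) (0 : Fin n)
  have h1 : Nat.card (MulAction.orbit (Perm (Fin n)) (0 : Fin n)) = n := by
    rw [horb, Nat.card_coe_set_eq, Set.ncard_univ, Nat.card_eq_fintype_card, Fintype.card_fin]
  have h2 : Nat.card (Perm (Fin n)) = Nat.factorial n := by
    rw [Nat.card_eq_fintype_card, Fintype.card_perm, Fintype.card_fin]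
  have hn0 : 0 < n := Nat.pos_of_ne_zero (NeZero.ne n)
  have hos' : Nat.card (MulAction.orbit (Perm (Fin n)) (0 : Fin n)) * Nat.card (Stab n) =
      Nat.card (Perm (Fin n)) := by
    simpa [Nat.card_eq_fintype_card] using hos
  rw [h1, h2, ← Nat.mul_factorial_pred hn0.ne'] at hos'
  exact Nat.eq_of_mul_eq_mul_left hn0 hos'

end cards

section count

variable [NeZero n] {G : Subgroup (Perm (Fin n))}

/-- coset of elements sending `0` to `i` -/
abbrev Cos (G : Subgroup (Perm (Fin n))) (i : Fin n) : Type _ :=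
  {g : Perm (Fin n) // g ∈ G ∧ g 0 = i}

/-- each coset is equivalent to `H` -/
noncomputable def cosEquiv (g' : Fin n → Perm (Fin n)) (hg'G : ∀ i, g' i ∈ G)
    (hg'0 : ∀ i, g' i 0 = i) (i : Fin n) : ↥(G ⊓ Stab n) ≃ Cos G i where
  toFun h := ⟨g' i * h.1, mul_mem (hg'G i) (Subgroup.mem_inf.1 h.2).1, by
    rw [Perm.mul_apply, mem_Stab_iff.1 (Subgroup.mem_inf.1 h.2).2, hg'0]⟩
  invFun c := ⟨(g' i)⁻¹ * c.1, Subgroup.mem_inf.2 ⟨mul_mem (inv_mem (hg'G i)) c.2.1,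
    mem_Stab_iff.2 (by
      have h : (g' i)⁻¹ (g' i 0) = 0 := Equiv.symm_apply_apply (g' i) 0
      rw [hg'0 i] at h
      rw [Perm.mul_apply, c.2.2]
      exact h)⟩⟩
  left_inv h := by
    ext
    simp [mul_assoc]
  right_inv c := by
    ext
    simp [← mul_assoc]

lemma rp_zero_eq_one {S : Set (Perm (Fin n))} (h1 : (1 : Perm (Fin n)) ∈ S)
    (hS : ∀ i : Fin n, ∃! s, s ∈ S ∧ s 0 = i) : rp hS 0 = 1 :=
  (rp_uniq hS h1 (by simp)).symm

lemma card_transversals (htrans : ∀ i : Fin n, ∃ g ∈ G, g 0 = i)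
    (g' : Fin n → Perm (Fin n)) (hg'G : ∀ i, g' i ∈ G) (hg'0 : ∀ i, g' i 0 = i) :
    Nat.card {S : Set (Perm (Fin n)) // IsLeftTransversalIn G (G ⊓ Stab n) S} =
      (Nat.card ↥(G ⊓ Stab n)) ^ (n - 1) := by
  classical
  have exu : ∀ (S : {S : Set (Perm (Fin n)) // IsLeftTransversalIn G (G ⊓ Stab n) S}),
      ∀ i : Fin n, ∃! s, s ∈ S.1 ∧ s 0 = i := fun S => ((trans_iff' htrans S.1).1 S.2).2.2
  set Φ : {S : Set (Perm (Fin n)) // IsLeftTransversalIn G (G ⊓ Stab n) S} →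
      (∀ i : {i : Fin n // i ≠ 0}, Cos G i.1) :=
    fun S i => ⟨rp (exu S) i.1, S.2.2.1 (rp_mem (exu S) i.1), rp_zero (exu S) i.1⟩ with hΦ
  have hbij : Function.Bijective Φ := by
    constructor
    · intro S1 S2 h12
      have key : ∀ (A B : {S : Set (Perm (Fin n)) // IsLeftTransversalIn G (G ⊓ Stab n) S}),
          (∀ i : {i : Fin n // i ≠ 0}, Φ A i = Φ B i) → A.1 ⊆ B.1 := by
        intro A B hAB s hs
        by_cases h0 : s 0 = 0
        · have : s = rp (exu A) 0 := rp_uniq (exu A) hs h0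
          rw [this, rp_zero_eq_one A.2.1]
          exact B.2.1
        · have h1 : s = rp (exu A) (s 0) := rp_eq_self (exu A) hs
          have h2 : rp (exu A) (s 0) = rp (exu B) (s 0) := by
            have := hAB ⟨s 0, h0⟩
            exact congrArg Subtype.val this
          rw [h1, h2]
          exact rp_mem (exu B) (s 0)
      apply Subtype.ext
      apply Set.Subset.antisymm
      · exact key S1 S2 (fun i => by rw [h12])
      · exact key S2 S1 (fun i => by rw [h12])
    · intro fam
      set S : Set (Perm (Fin n)) :=
        insert 1 (Set.range fun i : {i : Fin n // i ≠ 0} => (fam i).1) with hSdef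
      have hS : IsLeftTransversalIn G (G ⊓ Stab n) S := by
        rw [trans_iff' htrans]
        refine ⟨Set.mem_insert _ _, ?_, ?_⟩
        · rintro s (rfl | ⟨i, rfl⟩)
          · exact one_mem G
          · exact (fam i).2.1
        · intro i
          by_cases h0 : i = 0
          · subst h0
            refine ⟨1, ⟨Set.mem_insert _ _, by simp⟩, ?_⟩
            rintro t ⟨(rfl | ⟨j, rfl⟩), ht0⟩
            · rfl
            · exact absurd ht0 (by rw [(fam j).2.2]; exact j.2)
          · refine ⟨(fam ⟨i, h0⟩).1, ⟨Set.mem_insert_of_mem _ ⟨⟨i, h0⟩, rfl⟩,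
              (fam ⟨i, h0⟩).2.2⟩, ?_⟩
            rintro t ⟨(rfl | ⟨j, rfl⟩), ht0⟩
            · exact absurd ht0.symm h0
            · have : j = ⟨i, h0⟩ := Subtype.ext (by rw [← (fam j).2.2]; exact ht0)
              rw [this]
      refine ⟨⟨S, hS⟩, ?_⟩
      funext i
      apply Subtype.ext
      show rp (exu ⟨S, hS⟩) i.1 = (fam i).1
      exact (rp_uniq (exu ⟨S, hS⟩) (Set.mem_insert_of_mem _ ⟨i, rfl⟩) (fam i).2.2).symm
  rw [Nat.card_eq_of_bijective Φ hbij, Nat.card_pi]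
  have hcard : ∀ i : {i : Fin n // i ≠ 0}, Nat.card (Cos G i.1) = Nat.card ↥(G ⊓ Stab n) :=
    fun i => (Nat.card_congr (cosEquiv g' hg'G hg'0 i.1)).symm
  rw [Finset.prod_congr rfl (fun i _ => hcard i), Finset.prod_const, Finset.card_univ]
  congr 1
  rw [Fintype.card_subtype_compl, Fintype.card_subtype_eq, Fintype.card_fin]

end count

section conjset

variable [NeZero n] {G : Subgroup (Perm (Fin n))}

/-- conjugate of a set of permutations -/
def conjSet (f : Perm (Fin n)) (S : Set (Perm (Fin n))) : Set (Perm (Fin n)) :=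
  (fun t => f * t * f⁻¹) '' S

omit [NeZero n] in
lemma conjSet_one (S : Set (Perm (Fin n))) : conjSet 1 S = S := by
  simp [conjSet]

omit [NeZero n] in
lemma conjSet_mul (f g : Perm (Fin n)) (S : Set (Perm (Fin n))) :
    conjSet (f * g) S = conjSet f (conjSet g S) := by
  unfold conjSet
  rw [Set.image_image]
  apply Set.image_congr
  intro t _
  group

/-- the subgroup of permutations fixing `0` and normalizing `G` into itself -/
def NG (G : Subgroup (Perm (Fin n))) : Subgroup (Perm (Fin n)) where
  carrier := {f | f 0 = 0 ∧ ∀ g ∈ G, f * g * f⁻¹ ∈ G}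
  one_mem' := ⟨rfl, fun g hg => by simpa using hg⟩
  mul_mem' := by
    rintro a b ⟨ha0, ha⟩ ⟨hb0, hb⟩
    refine ⟨by rw [Perm.mul_apply, hb0, ha0], fun g hg => ?_⟩
    have h : a * b * g * (a * b)⁻¹ = a * (b * g * b⁻¹) * a⁻¹ := by group
    rw [h]
    exact ha _ (hb g hg)
  inv_mem' := by
    rintro a ⟨ha0, ha⟩
    have h0 : a⁻¹ 0 = 0 := by
      have h : a⁻¹ (a 0) = 0 := Equiv.symm_apply_apply a 0
      rwa [ha0] at h
    refine ⟨h0, fun g hg => ?_⟩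
    have himg : (fun t => a * t * a⁻¹) '' (G : Set (Perm (Fin n))) = G := by
      apply Set.eq_of_subset_of_ncard_le
      · rintro _ ⟨t, ht, rfl⟩; exact ha t ht
      · rw [Set.ncard_image_of_injective _ (conj_map_inj a)]
      · exact Set.toFinite _
    have : g ∈ (fun t => a * t * a⁻¹) '' (G : Set (Perm (Fin n))) := by rw [himg]; exact hg
    obtain ⟨t, ht, rfl⟩ := this
    have h : a⁻¹ * (a * t * a⁻¹) * a⁻¹⁻¹ = t := by group
    rw [h]
    exact ht

lemma mem_NG_iff {f : Perm (Fin n)} :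
    f ∈ NG G ↔ f 0 = 0 ∧ ∀ g ∈ G, f * g * f⁻¹ ∈ G := Iff.rfl

lemma NG_le_stab : NG G ≤ Stab n := fun f hf => mem_Stab_iff.2 hf.1

/-- conjugating a transversal by an element of `NG G` yields a transversal -/
lemma conjSet_transversal (htrans : ∀ i : Fin n, ∃ g ∈ G, g 0 = i)
    {f : Perm (Fin n)} (hf : f ∈ NG G) {S : Set (Perm (Fin n))}
    (hS : IsLeftTransversalIn G (G ⊓ Stab n) S) :
    IsLeftTransversalIn G (G ⊓ Stab n) (conjSet f S) := by
  have hS' := ((trans_iff' htrans S).1 hS).2.2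
  have happ : ∀ t : Perm (Fin n), (f * t * f⁻¹) 0 = f (t 0) := by
    intro t
    have h0 : f⁻¹ 0 = 0 := by
      have h : f⁻¹ (f 0) = 0 := Equiv.symm_apply_apply f 0
      rwa [hf.1] at h
    simp [Perm.mul_apply, h0]
  rw [trans_iff' htrans]
  refine ⟨⟨1, hS.1, by group⟩, ?_, ?_⟩
  · rintro _ ⟨t, ht, rfl⟩
    exact hf.2 t (hS.2.1 ht)
  · intro i
    refine ⟨f * rp hS' (f⁻¹ i) * f⁻¹, ⟨⟨rp hS' (f⁻¹ i), rp_mem hS' _, rfl⟩, ?_⟩, ?_⟩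
    · rw [happ, rp_zero]; exact Equiv.apply_symm_apply f i
    · rintro _ ⟨⟨t, ht, rfl⟩, h0⟩
      rw [happ] at h0
      have ht0 : t 0 = f⁻¹ i := by rw [← h0]; exact (Equiv.symm_apply_apply f (t 0)).symm
      rw [rp_uniq hS' ht ht0]

end conjset

section caseA

variable [NeZero n] {G : Subgroup (Perm (Fin n))}

lemma caseA_contra (hn : 2 ≤ n) (htrans : ∀ i : Fin n, ∃ g ∈ G, g 0 = i)
    (hHne : G ⊓ Stab n ≠ ⊥)
    (g' : Fin n → Perm (Fin n)) (hg'G : ∀ i, g' i ∈ G) (hg'0 : ∀ i, g' i 0 = i)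
    {T₀ : Set (Perm (Fin n))} (hT₀ : IsLeftTransversalIn G (G ⊓ Stab n) T₀)
    (hgen : Subgroup.closure T₀ = G)
    (hall : ∀ T L : Set (Perm (Fin n)), IsLeftTransversalIn G (G ⊓ Stab n) T →
      IsLeftTransversalIn G (G ⊓ Stab n) L → Conj T L) : False := by
  classical
  have hT₀' := ((trans_iff' htrans T₀).1 hT₀).2.2
  -- every transversal is an `NG G`-conjugate of `T₀`
  have hstep : ∀ L : Set (Perm (Fin n)), IsLeftTransversalIn G (G ⊓ Stab n) L →
      ∃ f : ↥(NG G), conjSet f.1 T₀ = L := by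
    intro L hL
    have hL' := ((trans_iff' htrans L).1 hL).2.2
    obtain ⟨f, hf0, hf⟩ := hall T₀ L hT₀ hL
    have hfNG : f ∈ NG G := by
      refine ⟨hf0, fun g hg => ?_⟩
      have hmap : Subgroup.map ((MulAut.conj f) : Perm (Fin n) →* Perm (Fin n)) G ≤ G := by
        rw [← hgen, MonoidHom.map_closure]
        apply Subgroup.closure_le _ |>.2
        rintro _ ⟨t, ht, rfl⟩
        rw [hgen]
        exact hL.2.1 (by simpa [MulAut.conj_apply] using hf t ht)
      have : (MulAut.conj f) g ∈ Subgroup.map ((MulAut.conj f) : Perm (Fin n) →* Perm (Fin n)) G :=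
        ⟨g, hg, rfl⟩
      simpa [MulAut.conj_apply] using hmap this
    exact ⟨⟨f, hfNG⟩, conj_image hT₀' hL' hf⟩
  -- the stabilizer of `T₀` inside `NG G`
  set K : Subgroup ↥(NG G) :=
    { carrier := {f | conjSet f.1 T₀ = T₀}
      one_mem' := conjSet_one T₀
      mul_mem' := by
        rintro a b ha hb
        show conjSet (a.1 * b.1) T₀ = T₀
        rw [conjSet_mul, hb, ha]
      inv_mem' := by
        rintro a ha
        show conjSet (a⁻¹).1 T₀ = T₀
        have : conjSet ((a⁻¹).1 * a.1) T₀ = T₀ := by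
          have h : (a⁻¹).1 * a.1 = 1 := by
            rw [← Subgroup.coe_mul, inv_mul_cancel, Subgroup.coe_one]
          rw [h, conjSet_one]
        rw [conjSet_mul] at this
        rw [show conjSet a.1 T₀ = T₀ from ha] at this
        exact this } with hK
  -- bijection between N/K and the set of transversals
  set X := {S : Set (Perm (Fin n)) // IsLeftTransversalIn G (G ⊓ Stab n) S} with hX
  set ψ : ↥(NG G) → X := fun f => ⟨conjSet f.1 T₀, conjSet_transversal htrans f.2 hT₀⟩ with hψ
  have hsound : ∀ a b : ↥(NG G), (QuotientGroup.leftRel K) a b → ψ a = ψ b := by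
    intro a b hab
    rw [QuotientGroup.leftRel_apply] at hab
    have : conjSet (a⁻¹ * b : ↥(NG G)).1 T₀ = T₀ := hab
    apply Subtype.ext
    show conjSet a.1 T₀ = conjSet b.1 T₀
    have h2 : conjSet a.1 (conjSet ((a⁻¹ * b : ↥(NG G))).1 T₀) = conjSet b.1 T₀ := by
      rw [← conjSet_mul]
      congr 1
      push_cast
      group
    rw [this] at h2
    exact h2
  set e : (↥(NG G) ⧸ K) → X := Quotient.lift ψ hsound with he
  have hbij : Function.Bijective e := by
    constructor
    · intro x y
      induction x using Quotient.ind
      induction y using Quotient.ind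
      rename_i a b
      intro hab
      have h1 : conjSet a.1 T₀ = conjSet b.1 T₀ := congrArg Subtype.val hab
      apply Quotient.sound
      have hmem : a⁻¹ * b ∈ K := by
        show conjSet (a⁻¹ * b : ↥(NG G)).1 T₀ = T₀
        have h2 : (a⁻¹ * b : ↥(NG G)).1 = a.1⁻¹ * b.1 := rfl
        rw [h2, conjSet_mul, ← h1, ← conjSet_mul, inv_mul_cancel, conjSet_one]
      exact QuotientGroup.leftRel_apply.mpr hmem
    · intro L
      obtain ⟨f, hf⟩ := hstep L.1 L.2
      exact ⟨Quotient.mk _ f, Subtype.ext hf⟩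
  -- cardinality chain
  have hcardX : Nat.card X = (Nat.card ↥(G ⊓ Stab n)) ^ (n - 1) :=
    card_transversals htrans g' hg'G hg'0
  have hdvd1 : Nat.card X ∣ Nat.card ↥(NG G) := by
    rw [← Nat.card_eq_of_bijective e hbij]
    rw [Subgroup.card_eq_card_quotient_mul_card_subgroup K]
    exact Dvd.intro _ rfl
  have hdvd2 : Nat.card ↥(NG G) ∣ Nat.card ↥(Stab n) := Subgroup.card_dvd_of_le NG_le_stab
  have hcards : Nat.card ↥(Stab n) = Nat.factorial (n - 1) := card_stab
  -- prime divisor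
  have hcardH : Nat.card ↥(G ⊓ Stab n) ≠ 1 := by
    intro h
    exact hHne (Subgroup.card_eq_one.1 h)
  obtain ⟨p, hp, hpdvd⟩ := Nat.exists_prime_and_dvd hcardH
  have hfinal : p ^ (n - 1) ∣ Nat.factorial (n - 1) := by
    calc p ^ (n - 1) ∣ (Nat.card ↥(G ⊓ Stab n)) ^ (n - 1) := pow_dvd_pow_of_dvd hpdvd _
    _ = Nat.card X := hcardX.symm
    _ ∣ Nat.card ↥(NG G) := hdvd1
    _ ∣ Nat.card ↥(Stab n) := hdvd2
    _ = Nat.factorial (n - 1) := hcards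
  exact not_pow_dvd_factorial hp (by omega) hfinal

end caseA

section caseB

variable [NeZero n]

lemma card_regular {U : Subgroup (Perm (Fin n))} (g' : Fin n → Perm (Fin n))
    (hg'U : ∀ i, g' i ∈ U) (hg'0 : ∀ i, g' i 0 = i) (hbot : U ⊓ Stab n = ⊥) :
    Nat.card ↥U = n := by
  classical
  have horb : MulAction.orbit ↥U (0 : Fin n) = Set.univ := by
    ext i
    simp only [Set.mem_univ, iff_true, MulAction.mem_orbit_iff]
    refine ⟨⟨g' i, hg'U i⟩, ?_⟩
    show (g' i) • (0 : Fin n) = i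
    rw [Perm.smul_def, hg'0]
  have hstab : MulAction.stabilizer ↥U (0 : Fin n) = ⊥ := by
    rw [Subgroup.eq_bot_iff_forall]
    intro u hu
    have hu0 : u.1 0 = 0 := by
      have : u.1 • (0 : Fin n) = 0 := hu
      rwa [Perm.smul_def] at this
    have h1 : u.1 ∈ U ⊓ Stab n := Subgroup.mem_inf.2 ⟨u.2, mem_Stab_iff.2 hu0⟩
    rw [hbot, Subgroup.mem_bot] at h1
    exact Subtype.ext h1
  have hos' : Nat.card (MulAction.orbit ↥U (0 : Fin n)) *
      Nat.card (MulAction.stabilizer ↥U (0 : Fin n)) = Nat.card ↥U := by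
    rw [← Nat.card_prod]
    exact Nat.card_congr (MulAction.orbitProdStabilizerEquivGroup ↥U 0)
  have h1 : Nat.card (MulAction.orbit ↥U (0 : Fin n)) = n := by
    rw [horb, Nat.card_coe_set_eq, Set.ncard_univ, Nat.card_eq_fintype_card, Fintype.card_fin]
  have h2 : Nat.card (MulAction.stabilizer ↥U (0 : Fin n)) = 1 := by
    rw [hstab]
    exact Subgroup.card_bot
  rw [h1, h2, mul_one] at hos'
  exact hos'.symm

lemma subgroup_ncard_eq (W : Subgroup (Perm (Fin n))) :
    (W : Set (Perm (Fin n))).ncard = Nat.card ↥W := by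
  rw [← Nat.card_coe_set_eq]
  exact Nat.card_congr (Equiv.refl _)

lemma caseB1 (hn3 : 3 ≤ n) {G U : Subgroup (Perm (Fin n))} (hUG : U ≤ G)
    (g' : Fin n → Perm (Fin n)) (hg'U : ∀ i, g' i ∈ U) (hg'0 : ∀ i, g' i 0 = i)
    (hbot : U ⊓ Stab n = ⊥) {h : Perm (Fin n)} (hhH : h ∈ G ⊓ Stab n) (hh1 : h ≠ 1) :
    ∃ T L : Set (Perm (Fin n)), IsLeftTransversalIn G (G ⊓ Stab n) T ∧
      IsLeftTransversalIn G (G ⊓ Stab n) L ∧ ¬ Conj T L := by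
  classical
  have htrans : ∀ i : Fin n, ∃ g ∈ G, g 0 = i := fun i => ⟨g' i, hUG (hg'U i), hg'0 i⟩
  have hh0 : h 0 = 0 := mem_Stab_iff.1 (Subgroup.mem_inf.1 hhH).2
  have hhG : h ∈ G := (Subgroup.mem_inf.1 hhH).1
  have hhU : h ∉ U := by
    intro habs
    have : h ∈ U ⊓ Stab n := Subgroup.mem_inf.2 ⟨habs, mem_Stab_iff.2 hh0⟩
    rw [hbot, Subgroup.mem_bot] at this
    exact hh1 this
  -- per-point uniqueness inside U
  have hUu : ∀ i : Fin n, ∃! s, s ∈ (U : Set (Perm (Fin n))) ∧ s 0 = i := by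
    intro i
    refine ⟨g' i, ⟨hg'U i, hg'0 i⟩, ?_⟩
    rintro s ⟨hsU, hs0⟩
    by_contra hne
    have hmem : (g' i)⁻¹ * s ∈ U ⊓ Stab n := by
      refine Subgroup.mem_inf.2 ⟨mul_mem (inv_mem (hg'U i)) hsU, mem_Stab_iff.2 ?_⟩
      have hx : (g' i)⁻¹ (g' i 0) = 0 := Equiv.symm_apply_apply (g' i) 0
      rw [hg'0 i] at hx
      rw [Perm.mul_apply, hs0]
      exact hx
    rw [hbot, Subgroup.mem_bot] at hmem
    apply hne
    have := congrArg (fun x => g' i * x) hmem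
    simpa [← mul_assoc] using this
  have hT : IsLeftTransversalIn G (G ⊓ Stab n) (U : Set (Perm (Fin n))) := by
    rw [trans_iff' htrans]
    exact ⟨one_mem U, fun s hs => hUG hs, hUu⟩
  set i₁ : Fin n := ⟨1, by omega⟩ with hi₁
  have hi₁0 : i₁ ≠ 0 := by
    intro habs
    have := congrArg Fin.val habs
    simp [hi₁] at this
  set t₁ : Perm (Fin n) := g' i₁ with ht₁
  have ht₁U : t₁ ∈ U := hg'U i₁
  have ht₁0 : t₁ 0 = i₁ := hg'0 i₁
  have hth0 : (t₁ * h) 0 = i₁ := by rw [Perm.mul_apply, hh0, ht₁0]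
  have hthU : t₁ * h ∉ (U : Set (Perm (Fin n))) := by
    intro habs
    exact hhU (by simpa [← mul_assoc] using mul_mem (inv_mem ht₁U) habs)
  set L : Set (Perm (Fin n)) := insert (t₁ * h) ((U : Set (Perm (Fin n))) \ {t₁}) with hLdef
  have hLu : ∀ i : Fin n, ∃! s, s ∈ L ∧ s 0 = i := by
    intro i
    by_cases hcase : i = i₁
    · subst hcase
      refine ⟨t₁ * h, ⟨Set.mem_insert _ _, hth0⟩, ?_⟩
      rintro s ⟨(rfl | ⟨hsU, hs1⟩), hs0⟩
      · rfl
      · exact absurd ((hUu i₁).unique ⟨hsU, hs0⟩ ⟨ht₁U, ht₁0⟩) hs1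
    · refine ⟨g' i, ⟨Set.mem_insert_of_mem _ ⟨hg'U i, ?_⟩, hg'0 i⟩, ?_⟩
      · intro habs
        rw [Set.mem_singleton_iff] at habs
        apply hcase
        rw [← hg'0 i, habs, ht₁0]
      · rintro s ⟨(rfl | ⟨hsU, _⟩), hs0⟩
        · exact absurd hs0 (by rw [hth0]; exact fun e => hcase e.symm)
        · exact (hUu i).unique ⟨hsU, hs0⟩ ⟨hg'U i, hg'0 i⟩
  have h1U : (1 : Perm (Fin n)) ∈ (U : Set (Perm (Fin n))) \ {t₁} := by
    refine ⟨one_mem U, ?_⟩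
    intro habs
    rw [Set.mem_singleton_iff] at habs
    apply hi₁0
    rw [← ht₁0, ← habs, Perm.one_apply]
  have hL : IsLeftTransversalIn G (G ⊓ Stab n) L := by
    rw [trans_iff' htrans]
    refine ⟨Set.mem_insert_of_mem _ h1U, ?_, hLu⟩
    rintro s (rfl | ⟨hsU, _⟩)
    · exact mul_mem (hUG ht₁U) hhG
    · exact hUG hsU
  refine ⟨(U : Set (Perm (Fin n))), L, hT, hL, ?_⟩
  rintro ⟨f, hf0, hf⟩
  have himg : (fun t => f * t * f⁻¹) '' (U : Set (Perm (Fin n))) = L := conj_image hUu hLu hf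
  set V : Subgroup (Perm (Fin n)) :=
    Subgroup.map ((MulAut.conj f) : Perm (Fin n) →* Perm (Fin n)) U with hV
  have hVset : (V : Set (Perm (Fin n))) = L := by
    rw [hV, Subgroup.coe_map, ← himg]
    apply Set.image_congr
    intro t _
    simp [MulAut.conj_apply]
  set W : Subgroup (Perm (Fin n)) := U ⊓ V with hW
  have hWsub : (U : Set (Perm (Fin n))) \ {t₁} ⊆ (W : Set (Perm (Fin n))) := by
    rintro s ⟨hsU, hs1⟩
    refine Subgroup.mem_inf.2 ⟨hsU, ?_⟩
    have : s ∈ (V : Set (Perm (Fin n))) := by rw [hVset]; exact Set.mem_insert_of_mem _ ⟨hsU, hs1⟩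
    exact this
  have hcardU : Nat.card ↥U = n := card_regular g' hg'U hg'0 hbot
  have hUncard : (U : Set (Perm (Fin n))).ncard = n := by rw [subgroup_ncard_eq, hcardU]
  have hWlow : n - 1 ≤ (W : Set (Perm (Fin n))).ncard := by
    have h1 : ((U : Set (Perm (Fin n))) \ {t₁}).ncard = n - 1 := by
      rw [Set.ncard_diff_singleton_of_mem ht₁U, hUncard]
    rw [← h1]
    exact Set.ncard_le_ncard hWsub (Set.toFinite _)
  have hWdvd : Nat.card ↥W ∣ Nat.card ↥U := Subgroup.card_dvd_of_le inf_le_left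
  have hWcard : Nat.card ↥W = n := by
    obtain ⟨k, hk⟩ := hWdvd
    rw [hcardU] at hk
    have hW1 : n - 1 ≤ Nat.card ↥W := by rwa [← subgroup_ncard_eq]
    rcases Nat.lt_or_ge k 2 with hk2 | hk2
    · interval_cases k
      · omega
      · omega
    · exfalso
      have h2 : Nat.card ↥W * 2 ≤ Nat.card ↥W * k := Nat.mul_le_mul_left _ hk2
      omega
  have hWU : W = U := by
    have hsub : (W : Set (Perm (Fin n))) ⊆ (U : Set (Perm (Fin n))) :=
      SetLike.coe_subset_coe.2 inf_le_left
    have heq : (W : Set (Perm (Fin n))) = (U : Set (Perm (Fin n))) :=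
      Set.eq_of_subset_of_ncard_le hsub (by rw [hUncard, subgroup_ncard_eq, hWcard]) (Set.toFinite _)
    exact SetLike.coe_injective heq
  have hUV : (U : Set (Perm (Fin n))) ⊆ L := by
    rw [← hVset]
    intro s hs
    have : s ∈ W := hWU ▸ hs
    exact (Subgroup.mem_inf.1 this).2
  have hUL : (U : Set (Perm (Fin n))) = L := by
    apply Set.eq_of_subset_of_ncard_le hUV _ (Set.toFinite _)
    rw [hUncard, ncard_transversal hLu]
  exact hthU (by rw [hUL]; exact Set.mem_insert _ _)

lemma transversal_mono {G U : Subgroup (Perm (Fin n))} (hUG : U ≤ G)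
    (htransU : ∀ i : Fin n, ∃ u ∈ U, u 0 = i) {S : Set (Perm (Fin n))}
    (hS : IsLeftTransversalIn U (U ⊓ Stab n) S) :
    IsLeftTransversalIn G (G ⊓ Stab n) S := by
  have htransG : ∀ i : Fin n, ∃ g ∈ G, g 0 = i := fun i =>
    let ⟨u, hu, hu0⟩ := htransU i
    ⟨u, hUG hu, hu0⟩
  rw [trans_iff' htransU] at hS
  rw [trans_iff' htransG]
  exact ⟨hS.1, fun s hs => hUG (hS.2.1 hs), hS.2.2⟩

end caseB

section main

variable [NeZero n]

lemma main_lemma (hn3 : 3 ≤ n) : ∀ (m : ℕ) (G : Subgroup (Perm (Fin n))), Nat.card ↥G ≤ m →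
    (∀ i : Fin n, ∃ g ∈ G, g 0 = i) → G ⊓ Stab n ≠ ⊥ →
    ∃ T L : Set (Perm (Fin n)), IsLeftTransversalIn G (G ⊓ Stab n) T ∧
      IsLeftTransversalIn G (G ⊓ Stab n) L ∧ ¬ Conj T L := by
  intro m
  induction m with
  | zero =>
    intro G hcard _ _
    exfalso
    have : 0 < Nat.card ↥G := Nat.card_pos
    omega
  | succ m IH =>
    intro G hcard htrans hHne
    obtain ⟨hnz, hn2⟩ : (0 : ℕ) < n ∧ 2 ≤ n := ⟨by omega, by omega⟩
    choose gg hggG hgg0 using htrans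
    set g' : Fin n → Perm (Fin n) := fun i => if i = 0 then 1 else gg i with hg'def
    have hg'G : ∀ i, g' i ∈ G := fun i => by
      by_cases hi : i = 0 <;> simp [hg'def, hi, one_mem, hggG]
    have hg'0 : ∀ i, g' i 0 = i := fun i => by
      by_cases hi : i = 0 <;> simp [hg'def, hi, hgg0]
    have htrans' : ∀ i : Fin n, ∃ g ∈ G, g 0 = i := fun i => ⟨g' i, hg'G i, hg'0 i⟩
    set T₀ : Set (Perm (Fin n)) := Set.range g' with hT₀def
    have hT₀ : IsLeftTransversalIn G (G ⊓ Stab n) T₀ := by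
      rw [trans_iff' htrans']
      refine ⟨⟨0, by simp [hg'def]⟩, ?_, fun i => ⟨g' i, ⟨⟨i, rfl⟩, hg'0 i⟩, ?_⟩⟩
      · rintro _ ⟨i, rfl⟩; exact hg'G i
      · rintro _ ⟨⟨j, rfl⟩, hj0⟩
        rw [hg'0] at hj0
        rw [hj0]
    set U := Subgroup.closure T₀ with hUdef
    have hT₀U : T₀ ⊆ (U : Set (Perm (Fin n))) := Subgroup.subset_closure
    have hUG : U ≤ G := (Subgroup.closure_le G).2 (by rintro _ ⟨i, rfl⟩; exact hg'G i)
    have htransU : ∀ i : Fin n, ∃ u ∈ U, u 0 = i := fun i => ⟨g' i, hT₀U ⟨i, rfl⟩, hg'0 i⟩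
    by_cases hUeq : U = G
    · by_contra hno
      push_neg at hno
      exact caseA_contra hn2 htrans' hHne g' hg'G hg'0 hT₀ hUeq
        (fun T L hT hL => hno T L hT hL)
    · have hUlt : Nat.card ↥U < Nat.card ↥G := by
        have hss : (U : Set (Perm (Fin n))) ⊂ (G : Set (Perm (Fin n))) := by
          refine ⟨SetLike.coe_subset_coe.2 hUG, fun habs => hUeq ?_⟩
          exact le_antisymm hUG (SetLike.coe_subset_coe.1 habs)
        have := Set.ncard_lt_ncard hss (Set.toFinite _)
        rwa [subgroup_ncard_eq, subgroup_ncard_eq] at this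
      by_cases hbot : U ⊓ Stab n = ⊥
      · obtain ⟨a, ha1⟩ := Subgroup.ne_bot_iff_exists_ne_one.1 hHne
        refine caseB1 hn3 hUG g' (fun i => hT₀U ⟨i, rfl⟩) hg'0 hbot a.2 ?_
        intro habs
        exact ha1 (Subtype.ext habs)
      · obtain ⟨T, L, hT, hL, hC⟩ := IH U (by omega) htransU hbot
        exact ⟨T, L, transversal_mono hUG htransU hT, transversal_mono hUG htransU hL, hC⟩

end main

end IctAux

open IctAux in
theorem ict_ne_one {n : ℕ} [NeZero n] (hn : 2 ≤ n)
    (G : Subgroup (Equiv.Perm (Fin n)))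
    (htrans : ∀ i : Fin n, ∃ g ∈ G, g 0 = i)
    (H : Subgroup (Equiv.Perm (Fin n)))
    (hH : H = G ⊓ MulAction.stabilizer (Equiv.Perm (Fin n)) (0 : Fin n))
    (hHne : H ≠ ⊥) :
    Nat.card (Quot fun (T L : {S : Set (Equiv.Perm (Fin n)) //
        IsLeftTransversalIn G H S}) =>
      ∃ σ : Equiv.Perm (Fin n) → Equiv.Perm (Fin n), IsLeftIso H T.1 L.1 σ) ≠ 1 := by
  subst hH
  rcases Nat.lt_or_ge n 3 with h2 | h3
  · exfalso
    apply hHne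
    rw [Subgroup.eq_bot_iff_forall]
    intro x hx
    have hx0 : x 0 = 0 := mem_Stab_iff.1 (Subgroup.mem_inf.1 hx).2
    apply Equiv.ext
    intro i
    simp only [Equiv.Perm.one_apply]
    by_cases hi : i = 0
    · rw [hi, hx0]
    · have h1 : x i ≠ 0 := fun habs => hi (x.injective (habs.trans hx0.symm))
      have hb1 : (x i).val < n := (x i).isLt
      have hb2 : i.val < n := i.isLt
      have hv1 : (x i).val ≠ 0 := fun hv => h1 (Fin.ext (by simpa using hv))
      have hv2 : i.val ≠ 0 := fun hv => hi (Fin.ext (by simpa using hv))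
      apply Fin.ext
      omega
  · intro hcard
    obtain ⟨T, L, hT, hL, hC⟩ := main_lemma h3 (Nat.card ↥G) G le_rfl htrans hHne
    obtain ⟨hsub, -⟩ := Nat.card_eq_one_iff_unique.1 hcard
    have heq := @Subsingleton.elim _ hsub
      (Quot.mk _ ⟨T, hT⟩ : Quot fun (T L : {S : Set (Equiv.Perm (Fin n)) //
        IsLeftTransversalIn G (G ⊓ MulAction.stabilizer (Equiv.Perm (Fin n)) (0 : Fin n)) S}) =>
        ∃ σ : Equiv.Perm (Fin n) → Equiv.Perm (Fin n),
          IsLeftIso (G ⊓ MulAction.stabilizer (Equiv.Perm (Fin n)) (0 : Fin n)) T.1 L.1 σ)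
      (Quot.mk _ ⟨L, hL⟩)
    have hEG := Quot.eq.1 heq
    have key : ∀ a b : {S : Set (Equiv.Perm (Fin n)) //
        IsLeftTransversalIn G (G ⊓ MulAction.stabilizer (Equiv.Perm (Fin n)) (0 : Fin n)) S},
        Relation.EqvGen (fun T L => ∃ σ : Equiv.Perm (Fin n) → Equiv.Perm (Fin n),
          IsLeftIso (G ⊓ MulAction.stabilizer (Equiv.Perm (Fin n)) (0 : Fin n)) T.1 L.1 σ) a b →
        Conj a.1 b.1 := by
      intro a b hab
      induction hab with
      | rel a b hr =>
        obtain ⟨σ, hσ⟩ := hr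
        exact iso_to_conj htrans a.2 b.2 hσ
      | refl a => exact conj_refl _
      | symm a b _ ih =>
        exact conj_symm ((trans_iff' htrans _).1 a.2).2.2 ((trans_iff' htrans _).1 b.2).2.2 ih
      | trans a b c _ _ ih1 ih2 => exact conj_trans ih1 ih2
    exact hC (key _ _ hEG)
end

section
/- Let G be a transitive subgroup of Sym(n), H = Stab_G(1), and suppose the set K of permutations fixing 1 that conjugate some left transversal of H in G to another equals N = N_{Sym(n-1)}(G). Then ict(G,H) = (1/|N|) ∑_{x ∈ N} |Fix(x)|, where Fix(x) = {T a left transversal of H in G with identity : xTx^{-1} = T}; i.e., ict(G,H) is the number of orbits of the conjugation action of N on the set of left transversals with identity. -/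
theorem Equiv.Perm.inv_apply_self {α : Type*} (f : Equiv.Perm α) (x : α) : f⁻¹ (f x) = x :=
  f.symm_apply_apply x

theorem Equiv.Perm.apply_inv_self {α : Type*} (f : Equiv.Perm α) (x : α) : f (f⁻¹ x) = x :=
  f.apply_symm_apply x

section IctAux

variable {n : ℕ} [NeZero n] {G H N : Subgroup (Equiv.Perm (Fin n))}

lemma ict_mem_H_iff (hH : H = G ⊓ MulAction.stabilizer (Equiv.Perm (Fin n)) (0 : Fin n))
    {g : Equiv.Perm (Fin n)} : g ∈ H ↔ g ∈ G ∧ g 0 = 0 := by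
  subst hH
  simp [Subgroup.mem_inf, MulAction.mem_stabilizer_iff, Equiv.Perm.smul_def]

lemma ict_mem_N (hN : N = MulAction.stabilizer (Equiv.Perm (Fin n)) (0 : Fin n) ⊓ Subgroup.normalizer (G : Set (Equiv.Perm (Fin n))))
    {x : Equiv.Perm (Fin n)} (hx : x ∈ N) :
    x 0 = 0 ∧ ∀ g : Equiv.Perm (Fin n), g ∈ G ↔ x * g * x⁻¹ ∈ G := by
  subst hN
  obtain ⟨h1, h2⟩ := Subgroup.mem_inf.mp hx
  exact ⟨h1, fun g => Subgroup.mem_normalizer_iff.mp h2 g⟩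

lemma ict_conj_mem_H
    (hH : H = G ⊓ MulAction.stabilizer (Equiv.Perm (Fin n)) (0 : Fin n))
    (hN : N = MulAction.stabilizer (Equiv.Perm (Fin n)) (0 : Fin n) ⊓ Subgroup.normalizer (G : Set (Equiv.Perm (Fin n))))
    {x h : Equiv.Perm (Fin n)} (hx : x ∈ N) (hh : h ∈ H) : x * h * x⁻¹ ∈ H := by
  obtain ⟨hx0, hxG⟩ := ict_mem_N hN hx
  obtain ⟨hhG, hh0⟩ := (ict_mem_H_iff hH).mp hh
  refine (ict_mem_H_iff hH).mpr ⟨(hxG h).mp hhG, ?_⟩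
  have hxi : x⁻¹ 0 = 0 := by
    conv_lhs => rw [← hx0]
    exact Equiv.Perm.inv_apply_self x 0
  simp [Equiv.Perm.mul_apply, hxi, hh0, hx0]

/-- In a transversal, there is a unique element taking `0` to any given value. -/
lemma ict_trans_unique
    (hH : H = G ⊓ MulAction.stabilizer (Equiv.Perm (Fin n)) (0 : Fin n))
    (htrans : ∀ i : Fin n, ∃ g ∈ G, g 0 = i)
    {T : Set (Equiv.Perm (Fin n))} (hT : IsLeftTransversalIn G H T) (i : Fin n) :
    ∃! s, s ∈ T ∧ s 0 = i := by
  obtain ⟨g, hg, hg0⟩ := htrans i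
  obtain ⟨s, ⟨hsT, hsH⟩, huniq⟩ := hT.2.2 g hg
  have key : ∀ s' ∈ T, (s'⁻¹ * g ∈ H ↔ s' 0 = i) := by
    intro s' hs'
    have hs'G := hT.2.1 hs'
    rw [ict_mem_H_iff hH]
    constructor
    · rintro ⟨-, h0⟩
      rw [Equiv.Perm.mul_apply] at h0
      have := congrArg s' h0
      rw [Equiv.Perm.apply_inv_self] at this
      rw [← hg0, this]
    · intro h0
      refine ⟨mul_mem (inv_mem hs'G) hg, ?_⟩
      rw [Equiv.Perm.mul_apply, hg0, ← h0, Equiv.Perm.inv_apply_self]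
  refine ⟨s, ⟨hsT, (key s hsT).mp hsH⟩, ?_⟩
  rintro s' ⟨hs'T, hs'0⟩
  exact huniq s' ⟨hs'T, (key s' hs'T).mpr hs'0⟩

/-- Conjugation by an element of `N` preserves transversals. -/
lemma ict_conj_transversal
    (hH : H = G ⊓ MulAction.stabilizer (Equiv.Perm (Fin n)) (0 : Fin n))
    (hN : N = MulAction.stabilizer (Equiv.Perm (Fin n)) (0 : Fin n) ⊓ Subgroup.normalizer (G : Set (Equiv.Perm (Fin n))))
    {x : Equiv.Perm (Fin n)} (hx : x ∈ N)
    {T : Set (Equiv.Perm (Fin n))} (hT : IsLeftTransversalIn G H T) :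
    IsLeftTransversalIn G H ((fun g => x * g * x⁻¹) '' T) := by
  obtain ⟨hx0, hxG⟩ := ict_mem_N hN hx
  refine ⟨⟨1, hT.1, by simp⟩, ?_, ?_⟩
  · rintro s ⟨t, ht, rfl⟩
    exact (hxG t).mp (hT.2.1 ht)
  · intro g hg
    have hg' : x⁻¹ * g * x ∈ G := by
      have := (hxG (x⁻¹ * g * x)).mpr
      apply this
      have : x * (x⁻¹ * g * x) * x⁻¹ = g := by group
      rwa [this]
    obtain ⟨t, ⟨htT, htH⟩, huniq⟩ := hT.2.2 (x⁻¹ * g * x) hg'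
    refine ⟨x * t * x⁻¹, ⟨⟨t, htT, rfl⟩, ?_⟩, ?_⟩
    · have : (x * t * x⁻¹)⁻¹ * g = x * (t⁻¹ * (x⁻¹ * g * x)) * x⁻¹ := by group
      rw [this]
      exact ict_conj_mem_H hH hN hx htH
    · rintro s ⟨⟨t', ht'T, rfl⟩, hs'⟩
      have h1 : t'⁻¹ * (x⁻¹ * g * x) = x⁻¹ * ((x * t' * x⁻¹)⁻¹ * g) * x⁻¹⁻¹ := by group
      have h2 : t'⁻¹ * (x⁻¹ * g * x) ∈ H := by
        rw [h1]; exact ict_conj_mem_H hH hN (inv_mem hx) hs'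
      rw [huniq t' ⟨ht'T, h2⟩]

/-- Backward direction: conjugation by an element of `N` is a left iso. -/
lemma ict_conj_isLeftIso
    (hH : H = G ⊓ MulAction.stabilizer (Equiv.Perm (Fin n)) (0 : Fin n))
    (hN : N = MulAction.stabilizer (Equiv.Perm (Fin n)) (0 : Fin n) ⊓ Subgroup.normalizer (G : Set (Equiv.Perm (Fin n))))
    {x : Equiv.Perm (Fin n)} (hx : x ∈ N) (T : Set (Equiv.Perm (Fin n))) :
    IsLeftIso H T ((fun g => x * g * x⁻¹) '' T) (fun g => x * g * x⁻¹) := by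
  constructor
  · apply Set.InjOn.bijOn_image
    intro a _ b _ hab
    simpa using hab
  · intro a ha b hb c hc hH'
    show (x * c * x⁻¹)⁻¹ * (x * a * x⁻¹ * (x * b * x⁻¹)) ∈ H
    have heq : (x * c * x⁻¹)⁻¹ * (x * a * x⁻¹ * (x * b * x⁻¹)) =
        x * (c⁻¹ * (a * b)) * x⁻¹ := by group
    rw [heq]
    exact ict_conj_mem_H hH hN hx hH'

/-- Forward direction: a left iso between transversals comes from
conjugation by a permutation fixing `0`. -/
lemma ict_iso_to_conj
    (hH : H = G ⊓ MulAction.stabilizer (Equiv.Perm (Fin n)) (0 : Fin n))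
    (htrans : ∀ i : Fin n, ∃ g ∈ G, g 0 = i)
    {T L : Set (Equiv.Perm (Fin n))}
    (hT : IsLeftTransversalIn G H T) (hL : IsLeftTransversalIn G H L)
    {σ : Equiv.Perm (Fin n) → Equiv.Perm (Fin n)} (hσ : IsLeftIso H T L σ) :
    ∃ α : Equiv.Perm (Fin n), α 0 = 0 ∧ (fun g => α * g * α⁻¹) '' T = L := by
  classical
  -- choose the element of T with given value at 0
  have hexT := fun i => ict_trans_unique hH htrans hT i
  set tT : Fin n → Equiv.Perm (Fin n) := fun i => (hexT i).exists.choose with htT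
  have htTmem : ∀ i, tT i ∈ T ∧ tT i 0 = i := fun i => (hexT i).exists.choose_spec
  have htTuniq : ∀ i, ∀ s ∈ T, s 0 = i → s = tT i := by
    intro i s hs hs0
    exact ((hexT i).unique ⟨hs, hs0⟩ ⟨(htTmem i).1, (htTmem i).2⟩)
  -- the induced map on points
  set β : Fin n → Fin n := fun i => σ (tT i) 0 with hβ
  -- membership in H characterization for elements of T / L
  have memH : ∀ s ∈ T, ∀ u ∈ T, ∀ v ∈ T, v 0 = s (u 0) → v⁻¹ * (s * u) ∈ H := by
    intro s hs u hu v hv hval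
    refine (ict_mem_H_iff hH).mpr ⟨mul_mem (inv_mem (hT.2.1 hv)) (mul_mem (hT.2.1 hs) (hT.2.1 hu)), ?_⟩
    have : (v⁻¹ * (s * u)) 0 = v⁻¹ (s (u 0)) := by
      simp [Equiv.Perm.mul_apply]
    rw [this, ← hval, Equiv.Perm.inv_apply_self]
  -- σ is a "homomorphism" evaluated on points
  have hom : ∀ s ∈ T, ∀ k : Fin n, σ s (β k) = β (s k) := by
    intro s hs k
    have h1 := memH s hs (tT k) (htTmem k).1 (tT (s k)) (htTmem (s k)).1
      (by rw [(htTmem (s k)).2, (htTmem k).2])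
    have h2 := hσ.2 s hs (tT k) (htTmem k).1 (tT (s k)) (htTmem (s k)).1 h1
    obtain ⟨-, h0⟩ := (ict_mem_H_iff hH).mp h2
    have : ((σ (tT (s k)))⁻¹ * (σ s * σ (tT k))) 0 =
        (σ (tT (s k)))⁻¹ (σ s (σ (tT k) 0)) := by
      simp [Equiv.Perm.mul_apply]
    rw [this] at h0
    have := congrArg (σ (tT (s k))) h0
    rw [Equiv.Perm.apply_inv_self] at this
    simpa [hβ] using this
  -- β is injective
  have hβinj : Function.Injective β := by
    intro i j hij
    have hTi := htTmem i
    have hTj := htTmem j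
    have hLi : σ (tT i) ∈ L := hσ.1.1 hTi.1
    have hLj : σ (tT j) ∈ L := hσ.1.1 hTj.1
    have := (ict_trans_unique hH htrans hL (β i)).unique ⟨hLi, rfl⟩ ⟨hLj, hij.symm⟩
    have h2 := hσ.1.2.1 hTi.1 hTj.1 this
    rw [← hTi.2, ← hTj.2, h2]
  have hβbij : Function.Bijective β := Finite.injective_iff_bijective.mp hβinj
  set α : Equiv.Perm (Fin n) := Equiv.ofBijective β hβbij with hα
  have hαapp : ∀ k, α k = β k := fun k => rfl
  -- α fixes 0
  have hT1 : tT 0 = 1 := (htTuniq 0 1 hT.1 rfl).symm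
  have hσ1 : σ 1 ∈ H := by
    have h1 : (1 : Equiv.Perm (Fin n))⁻¹ * (1 * 1) ∈ H := by simpa using H.one_mem
    have := hσ.2 1 hT.1 1 hT.1 1 hT.1 h1
    simpa using this
  have hσ10 : σ 1 0 = 0 := ((ict_mem_H_iff hH).mp hσ1).2
  have hα0 : α 0 = 0 := by
    rw [hαapp, hβ]; simp only [hT1]; exact hσ10
  -- conjugation by α equals σ on T
  have hconj : ∀ s ∈ T, α * s * α⁻¹ = σ s := by
    intro s hs
    ext j
    obtain ⟨k, rfl⟩ := hβbij.2 j
    have : (α * s * α⁻¹) (β k) = α (s (α⁻¹ (β k))) := by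
      simp [Equiv.Perm.mul_apply]
    rw [this]
    have hαinv : α⁻¹ (β k) = k := by
      rw [← hαapp]; exact Equiv.Perm.inv_apply_self α k
    rw [hαinv, hαapp, hom s hs k]
  refine ⟨α, hα0, ?_⟩
  have : (fun g => α * g * α⁻¹) '' T = σ '' T := by
    apply Set.image_congr
    intro s hs
    exact hconj s hs
  rw [this, hσ.1.image_eq]

end IctAux

theorem ict_burnside_count {n : ℕ} [NeZero n]
    (G : Subgroup (Equiv.Perm (Fin n)))
    (htrans : ∀ i : Fin n, ∃ g ∈ G, g 0 = i)
    (H : Subgroup (Equiv.Perm (Fin n)))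
    (hH : H = G ⊓ MulAction.stabilizer (Equiv.Perm (Fin n)) (0 : Fin n))
    (N : Subgroup (Equiv.Perm (Fin n)))
    (hN : N = MulAction.stabilizer (Equiv.Perm (Fin n)) (0 : Fin n) ⊓ Subgroup.normalizer (G : Set (Equiv.Perm (Fin n))))
    -- the hypothesis `K = N_{Sym(n-1)}(G)`
    (hK : {α : Equiv.Perm (Fin n) | α 0 = 0 ∧
        ∃ T L : Set (Equiv.Perm (Fin n)), IsLeftTransversalIn G H T ∧
          IsLeftTransversalIn G H L ∧ (fun g => α * g * α⁻¹) '' T = L} =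
      (N : Set (Equiv.Perm (Fin n)))) :
    -- Burnside: (number of isomorphism classes) * |N| = ∑_{x ∈ N} |Fix(x)|
    Nat.card (Quot fun (T L : {S : Set (Equiv.Perm (Fin n)) //
        IsLeftTransversalIn G H S}) =>
      ∃ σ : Equiv.Perm (Fin n) → Equiv.Perm (Fin n), IsLeftIso H T.1 L.1 σ) *
        Nat.card N =
      ∑ᶠ x : N, Nat.card {T : {S : Set (Equiv.Perm (Fin n)) //
        IsLeftTransversalIn G H S} //
          (fun g => (x : Equiv.Perm (Fin n)) * g * (x : Equiv.Perm (Fin n))⁻¹) '' T.1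
            = T.1} := by
  classical
  set X := {S : Set (Equiv.Perm (Fin n)) // IsLeftTransversalIn G H S} with hX
  -- the conjugation action of N on X
  letI : SMul N X := ⟨fun x T => ⟨(fun g => (x : Equiv.Perm (Fin n)) * g * (x : Equiv.Perm (Fin n))⁻¹) '' T.1,
    ict_conj_transversal hH hN x.2 T.2⟩⟩
  have smul_def : ∀ (x : N) (T : X),
      (x • T).1 = (fun g => (x : Equiv.Perm (Fin n)) * g * (x : Equiv.Perm (Fin n))⁻¹) '' T.1 :=
    fun x T => rfl
  letI : MulAction N X := {
    one_smul := by
      intro T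
      apply Subtype.ext
      rw [smul_def]
      simp
    mul_smul := by
      intro x y T
      apply Subtype.ext
      rw [smul_def, smul_def, smul_def, Set.image_image]
      apply Set.image_congr
      intro s _
      simp [mul_assoc] }
  -- the two relations agree
  have relIff : ∀ T L : X,
      (∃ σ : Equiv.Perm (Fin n) → Equiv.Perm (Fin n), IsLeftIso H T.1 L.1 σ) ↔
      (MulAction.orbitRel N X).r T L := by
    intro T L
    have orbIff : (MulAction.orbitRel N X).r T L ↔ ∃ x : N, x • L = T := by
      change T ∈ MulAction.orbit N L ↔ _
      exact MulAction.mem_orbit_iff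
    rw [orbIff]
    constructor
    · rintro ⟨σ, hσ⟩
      obtain ⟨α, hα0, hαTL⟩ := ict_iso_to_conj hH htrans T.2 L.2 hσ
      have hαN : α ∈ N := by
        suffices h : α ∈ (N : Set (Equiv.Perm (Fin n))) from h
        rw [← hK]
        exact ⟨hα0, T.1, L.1, T.2, L.2, hαTL⟩
      have hsm : (⟨α, hαN⟩ : N) • T = L := by
        apply Subtype.ext
        rw [smul_def]
        exact hαTL
      refine ⟨⟨α, hαN⟩⁻¹, ?_⟩
      rw [← hsm, inv_smul_smul]
    · rintro ⟨x, rfl⟩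
      have h1 := ict_conj_isLeftIso hH hN (inv_mem x.2)
        ((fun g => (x : Equiv.Perm (Fin n)) * g * (x : Equiv.Perm (Fin n))⁻¹) '' L.1)
      have h2 : (fun g => ((x : Equiv.Perm (Fin n)))⁻¹ * g * (((x : Equiv.Perm (Fin n)))⁻¹)⁻¹) ''
          ((fun g => (x : Equiv.Perm (Fin n)) * g * (x : Equiv.Perm (Fin n))⁻¹) '' L.1) = L.1 := by
        rw [Set.image_image]
        have heq : ∀ g : Equiv.Perm (Fin n),
            ((x : Equiv.Perm (Fin n)))⁻¹ * ((x : Equiv.Perm (Fin n)) * g * (x : Equiv.Perm (Fin n))⁻¹) *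
              (((x : Equiv.Perm (Fin n)))⁻¹)⁻¹ = g := by intro g; group
        simp only [heq, Set.image_id']
      rw [h2] at h1
      refine ⟨fun g => ((x : Equiv.Perm (Fin n)))⁻¹ * g * (((x : Equiv.Perm (Fin n)))⁻¹)⁻¹, ?_⟩
      rw [smul_def x L]
      exact h1
  -- identify the quotient with the orbit quotient
  haveI : Fintype X := Fintype.ofFinite X
  haveI : Fintype N := Fintype.ofFinite N
  haveI : Fintype (MulAction.orbitRel.Quotient N X) := Fintype.ofFinite _
  have hquot : Nat.card (Quot fun (T L : X) =>
      ∃ σ : Equiv.Perm (Fin n) → Equiv.Perm (Fin n), IsLeftIso H T.1 L.1 σ) =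
      Fintype.card (Quotient (MulAction.orbitRel N X)) := by
    rw [← Nat.card_eq_fintype_card]
    exact Nat.card_congr (Quot.congrRight relIff)
  -- identify the fixed points
  have hfix : ∀ x : N, Nat.card {T : X //
      (fun g => (x : Equiv.Perm (Fin n)) * g * (x : Equiv.Perm (Fin n))⁻¹) '' T.1 = T.1} =
      Fintype.card (MulAction.fixedBy X x) := by
    intro x
    rw [← Nat.card_eq_fintype_card]
    apply Nat.card_congr
    apply Equiv.subtypeEquivRight
    intro T
    constructor
    · intro h
      show x • T = T
      apply Subtype.ext
      rw [smul_def]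
      exact h
    · intro h
      have := congrArg Subtype.val h
      rwa [smul_def] at this
  rw [hquot]
  rw [finsum_congr hfix, finsum_eq_sum_of_fintype]
  rw [MulAction.sum_card_fixedBy_eq_card_orbits_mul_card_group N X]
  rw [Nat.card_eq_fintype_card]
end

section
/- ict(Alt(4), Alt(3)) = 7: the conjugation action of the point stabilizer Sym(3) ≤ Sym(4) on the 3^3 = 27 left transversals (with identity) of Alt(3) in Alt(4) has exactly 7 orbits, and these orbits are exactly the isomorphism classes of transversals. -/

abbrev P4 := Equiv.Perm (Fin 4)
abbrev K4 : Subgroup P4 := alternatingGroup (Fin 4)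
abbrev H4 : Subgroup P4 := K4 ⊓ MulAction.stabilizer P4 (0 : Fin 4)
instance K4dec : DecidablePred (· ∈ K4) := fun g =>
  decidable_of_iff (Equiv.Perm.sign g = 1) Equiv.Perm.mem_alternatingGroup.symm
lemma mem_H4 {h : P4} : h ∈ H4 ↔ h ∈ K4 ∧ h 0 = 0 := by
  simp [Subgroup.mem_inf, MulAction.mem_stabilizer_iff, Equiv.Perm.smul_def]
lemma coset_crit {x y : P4} (hx : x ∈ K4) (hy : y ∈ K4) : x⁻¹ * y ∈ H4 ↔ y 0 = x 0 := by
  rw [mem_H4]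
  constructor
  · rintro ⟨-, h⟩
    simpa [Equiv.Perm.mul_apply] using congrArg x h
  · intro h
    exact ⟨K4.mul_mem (K4.inv_mem hx) hy, by simp [Equiv.Perm.mul_apply, h]⟩

def Ctyp (i : Fin 4) := {g : P4 // g ∈ K4 ∧ g 0 = i}
instance (i : Fin 4) : Fintype (Ctyp i) := Subtype.fintype _
instance (i : Fin 4) : DecidableEq (Ctyp i) := Subtype.instDecidableEq
abbrev Tf := Ctyp 1 × Ctyp 2 × Ctyp 3
def tf (a : Tf) : Fin 4 → P4 := ![1, a.1.1, a.2.1.1, a.2.2.1]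

lemma tf_mem (a : Tf) (i : Fin 4) : tf a i ∈ K4 := by
  fin_cases i
  · exact K4.one_mem
  · exact a.1.2.1
  · exact a.2.1.2.1
  · exact a.2.2.2.1

lemma tf_apply_zero (a : Tf) (i : Fin 4) : tf a i 0 = i := by
  fin_cases i
  · rfl
  · exact a.1.2.2
  · exact a.2.1.2.2
  · exact a.2.2.2.2

lemma tf_transversal (a : Tf) : IsLeftTransversalIn K4 H4 (Set.range (tf a)) := by
  refine ⟨⟨0, rfl⟩, ?_, ?_⟩
  · rintro s ⟨i, rfl⟩; exact tf_mem a i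
  · intro g hg
    refine ⟨tf a (g 0), ⟨⟨_, rfl⟩, ?_⟩, ?_⟩
    · rw [coset_crit (tf_mem a _) hg, tf_apply_zero]
    · rintro s ⟨⟨j, rfl⟩, hs⟩
      rw [coset_crit (tf_mem a _) hg, tf_apply_zero] at hs
      rw [hs]

lemma transversal_normal_form {S : Set P4} (hS : IsLeftTransversalIn K4 H4 S) :
    ∃ a : Tf, S = Set.range (tf a) := by
  obtain ⟨h1, hsub, hrep⟩ := hS
  have htrans : ∀ i : Fin 4, ∃ g ∈ K4, g 0 = i := by decide
  have key : ∀ i : Fin 4, ∃! s, s ∈ S ∧ s 0 = i := by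
    intro i
    obtain ⟨g, hg, hg0⟩ := htrans i
    obtain ⟨s, ⟨hsS, hsH⟩, huniq⟩ := hrep g hg
    refine ⟨s, ⟨hsS, by rw [coset_crit (hsub hsS) hg, hg0] at hsH; exact hsH.symm⟩, ?_⟩
    rintro s' ⟨hs'S, hs'0⟩
    exact huniq s' ⟨hs'S, by rw [coset_crit (hsub hs'S) hg, hg0, hs'0]⟩
  choose t ht huniq using key
  have ht0 : t 0 = 1 := (huniq 0 1 ⟨h1, rfl⟩).symm
  refine ⟨⟨⟨t 1, hsub (ht 1).1, (ht 1).2⟩, ⟨t 2, hsub (ht 2).1, (ht 2).2⟩,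
    ⟨t 3, hsub (ht 3).1, (ht 3).2⟩⟩, ?_⟩
  have httf : ∀ i : Fin 4, tf ⟨⟨t 1, hsub (ht 1).1, (ht 1).2⟩, ⟨t 2, hsub (ht 2).1, (ht 2).2⟩,
      ⟨t 3, hsub (ht 3).1, (ht 3).2⟩⟩ i = t i := by
    intro i; fin_cases i <;> simp [tf, ht0]
  ext s
  constructor
  · intro hs
    exact ⟨s 0, by rw [httf (s 0)]; exact (huniq (s 0) s ⟨hs, rfl⟩).symm⟩
  · rintro ⟨i, rfl⟩
    rw [httf i]; exact (ht i).1

def Rtab (a b : Tf) : Prop :=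
  ∃ π : Equiv.Perm (Fin 4), ∀ i j, π (tf a i j) = tf b (π i) (π j)

lemma tab_pi_zero {a b : Tf} {π : Equiv.Perm (Fin 4)}
    (h : ∀ i j, π (tf a i j) = tf b (π i) (π j)) : π 0 = 0 := by
  have h1 : ∀ i, π i = tf b (π i) (π 0) := by
    intro i
    have := h i 0
    rwa [tf_apply_zero] at this
  have h2 := h1 (π⁻¹ 0)
  rw [Equiv.Perm.apply_inv_self] at h2
  have : tf b 0 = 1 := rfl
  rw [this] at h2
  simpa using h2.symm

lemma pizero_inv {π : P4} (h : π 0 = 0) : π⁻¹ 0 = 0 := by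
  conv_lhs => rw [← h]
  exact Equiv.symm_apply_apply π 0

lemma conj_mem_H4 {π h : P4} (hπ0 : π 0 = 0) (hh : h ∈ H4) : π * h * π⁻¹ ∈ H4 := by
  rw [mem_H4] at hh ⊢
  constructor
  · rw [Equiv.Perm.mem_alternatingGroup] at *
    rw [map_mul, map_mul, map_inv, Equiv.Perm.mem_alternatingGroup.1 hh.1, mul_one,
      mul_inv_cancel]
  · simp [Equiv.Perm.mul_apply, pizero_inv hπ0, hh.2, hπ0]

lemma conj_tf {a b : Tf} {π : Equiv.Perm (Fin 4)}
    (h : ∀ i j, π (tf a i j) = tf b (π i) (π j)) (i : Fin 4) :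
    π * tf a i * π⁻¹ = tf b (π i) := by
  refine Equiv.ext fun j => ?_
  have := h i (π⁻¹ j)
  rw [Equiv.Perm.apply_inv_self] at this
  simpa [Equiv.Perm.mul_apply] using this

lemma iso_iff_tab (a b : Tf) :
    (∃ σ : P4 → P4, IsLeftIso H4 (Set.range (tf a)) (Set.range (tf b)) σ) ↔ Rtab a b := by
  constructor
  · rintro ⟨σ, ⟨hmaps, hinj, hsurj⟩, hmul⟩
    have hσ : ∀ i, σ (tf a i) = tf b (σ (tf a i) 0) := by
      intro i
      obtain ⟨k, hk⟩ := hmaps ⟨i, rfl⟩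
      rw [← hk, tf_apply_zero, hk]
    set π' : Fin 4 → Fin 4 := fun i => σ (tf a i) 0 with hπ'
    have hπinj : Function.Injective π' := by
      intro i j hij
      have : σ (tf a i) = σ (tf a j) := by rw [hσ i, hσ j]; exact congrArg (tf b) hij
      have := hinj ⟨i, rfl⟩ ⟨j, rfl⟩ this
      have := congrArg (fun g : P4 => g 0) this
      simpa [tf_apply_zero] using this
    let π : Equiv.Perm (Fin 4) := Equiv.ofBijective π' (Finite.injective_iff_bijective.mp hπinj)
    refine ⟨π, fun i j => ?_⟩
    have hπap : ∀ i, π i = π' i := fun _ => rfl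
    have hk : (tf a (tf a i j))⁻¹ * (tf a i * tf a j) ∈ H4 := by
      rw [coset_crit (tf_mem a _) (K4.mul_mem (tf_mem a i) (tf_mem a j))]
      rw [tf_apply_zero]
      show (tf a i) (tf a j 0) = tf a i j
      rw [tf_apply_zero]
    have := hmul _ ⟨i, rfl⟩ _ ⟨j, rfl⟩ _ ⟨tf a i j, rfl⟩ hk
    rw [hσ i, hσ j, hσ (tf a i j)] at this
    rw [coset_crit (tf_mem b _) (K4.mul_mem (tf_mem b _) (tf_mem b _))] at this
    rw [tf_apply_zero] at this
    have key : (tf b (π' i) * tf b (π' j)) 0 = π' (tf a i j) := this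
    have key2 : tf b (π' i) (π' j) = π' (tf a i j) := by
      rw [← key, Equiv.Perm.mul_apply, tf_apply_zero]
    rw [hπap, hπap, hπap]
    exact key2.symm
  · rintro ⟨π, hπ⟩
    have hπ0 := tab_pi_zero hπ
    have hconj := conj_tf hπ
    refine ⟨fun g => π * g * π⁻¹, ⟨?_, ?_, ?_⟩, ?_⟩
    · rintro x ⟨i, rfl⟩
      exact ⟨π i, (hconj i).symm⟩
    · intro x _ y _ hxy
      have := congrArg (fun g => π⁻¹ * g * π) hxy
      simpa [mul_assoc] using this
    · rintro x ⟨k, rfl⟩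
      refine ⟨tf a (π⁻¹ k), ⟨π⁻¹ k, rfl⟩, ?_⟩
      show π * tf a (π⁻¹ k) * π⁻¹ = tf b k
      rw [hconj (π⁻¹ k), Equiv.Perm.apply_inv_self]
    · intro x _ y _ z _ hz
      have heq : (π * z * π⁻¹)⁻¹ * (π * x * π⁻¹ * (π * y * π⁻¹)) =
          π * (z⁻¹ * (x * y)) * π⁻¹ := by group
      show (π * z * π⁻¹)⁻¹ * (π * x * π⁻¹ * (π * y * π⁻¹)) ∈ H4
      rw [heq]
      exact conj_mem_H4 hπ0 hz

lemma tab_iff_conj (a b : Tf) :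
    Rtab a b ↔ ∃ α : P4, α 0 = 0 ∧ (fun g => α * g * α⁻¹) '' Set.range (tf a) = Set.range (tf b) := by
  constructor
  · rintro ⟨π, hπ⟩
    have hπ0 := tab_pi_zero hπ
    have hconj := conj_tf hπ
    refine ⟨π, hπ0, ?_⟩
    ext x
    constructor
    · rintro ⟨_, ⟨i, rfl⟩, rfl⟩
      exact ⟨π i, (hconj i).symm⟩
    · rintro ⟨k, rfl⟩
      exact ⟨tf a (π⁻¹ k), ⟨π⁻¹ k, rfl⟩, by
        show π * tf a (π⁻¹ k) * π⁻¹ = tf b k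
        rw [hconj (π⁻¹ k), Equiv.Perm.apply_inv_self]⟩
  · rintro ⟨α, hα0, himg⟩
    have hmem : ∀ i, ∃ k, α * tf a i * α⁻¹ = tf b k := by
      intro i
      have : α * tf a i * α⁻¹ ∈ Set.range (tf b) := by
        rw [← himg]; exact ⟨tf a i, ⟨i, rfl⟩, rfl⟩
      obtain ⟨k, hk⟩ := this
      exact ⟨k, hk.symm⟩
    have hconj : ∀ i, α * tf a i * α⁻¹ = tf b (α i) := by
      intro i
      obtain ⟨k, hk⟩ := hmem i
      have : (α * tf a i * α⁻¹) 0 = k := by rw [hk, tf_apply_zero]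
      have h2 : (α * tf a i * α⁻¹) 0 = α i := by
        show α (tf a i (α⁻¹ 0)) = α i
        rw [pizero_inv hα0, tf_apply_zero]
      rw [h2] at this
      rw [hk, this]
    refine ⟨α, fun i j => ?_⟩
    have := congrArg (fun g : P4 => g (α j)) (hconj i)
    simpa [Equiv.Perm.mul_apply] using this

instance RtabDec : DecidableRel Rtab := fun a b => by
  unfold Rtab; infer_instance

lemma Rtab_refl (a : Tf) : Rtab a a := ⟨1, fun i j => rfl⟩

lemma Rtab_symm {a b : Tf} : Rtab a b → Rtab b a := by
  rintro ⟨π, h⟩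
  refine ⟨π⁻¹, fun i j => ?_⟩
  have := h (π⁻¹ i) (π⁻¹ j)
  rw [Equiv.Perm.apply_inv_self, Equiv.Perm.apply_inv_self] at this
  rw [← this, Equiv.Perm.inv_apply_self]

lemma Rtab_trans {a b c : Tf} : Rtab a b → Rtab b c → Rtab a c := by
  rintro ⟨π₁, h₁⟩ ⟨π₂, h₂⟩
  refine ⟨π₂ * π₁, fun i j => ?_⟩
  show π₂ (π₁ (tf a i j)) = tf c (π₂ (π₁ i)) (π₂ (π₁ j))
  rw [h₁, h₂]

instance TfSetoid : Setoid Tf := ⟨Rtab, Rtab_refl, Rtab_symm, Rtab_trans⟩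

instance : DecidableRel ((· ≈ ·) : Tf → Tf → Prop) := RtabDec
instance : Fintype (Quotient TfSetoid) := Quotient.fintype TfSetoid

lemma card_quot_Rtab : Nat.card (Quot Rtab) = 7 := by
  have : Nat.card (Quotient TfSetoid) = 7 := by
    rw [Nat.card_eq_fintype_card]
    decide
  exact this

lemma range_tf_inj : Function.Injective (fun a : Tf => Set.range (tf a)) := by
  intro a b hab
  have hab' : Set.range (tf a) = Set.range (tf b) := hab
  have key : ∀ i, tf a i = tf b i := by
    intro i
    have : tf a i ∈ Set.range (tf b) := by rw [← hab']; exact ⟨i, rfl⟩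
    obtain ⟨k, hk⟩ := this
    have : k = i := by rw [← tf_apply_zero b k, hk, tf_apply_zero]
    rw [← hk, this]
  refine Prod.ext (Subtype.ext ?_) (Prod.ext (Subtype.ext ?_) (Subtype.ext ?_))
  · exact key 1
  · exact key 2
  · exact key 3


/-- `ict(Alt(4), Alt(3)) = 7`: there are exactly 7 isomorphism classes of left
transversals of `Alt(3)` (the stabilizer of `1` in `Alt(4)`) in `Alt(4)`, and two
transversals are isomorphic iff they are conjugate by a permutation fixing `1`. -/
theorem ict_alt4_alt3 :
    Nat.card (Quot fun (T L : {S : Set (Equiv.Perm (Fin 4)) //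
        IsLeftTransversalIn (alternatingGroup (Fin 4))
          (alternatingGroup (Fin 4) ⊓
            MulAction.stabilizer (Equiv.Perm (Fin 4)) (0 : Fin 4)) S}) =>
      ∃ σ : Equiv.Perm (Fin 4) → Equiv.Perm (Fin 4),
        IsLeftIso (alternatingGroup (Fin 4) ⊓
          MulAction.stabilizer (Equiv.Perm (Fin 4)) (0 : Fin 4)) T.1 L.1 σ) = 7 ∧
    ∀ T L : Set (Equiv.Perm (Fin 4)),
      IsLeftTransversalIn (alternatingGroup (Fin 4))
        (alternatingGroup (Fin 4) ⊓
          MulAction.stabilizer (Equiv.Perm (Fin 4)) (0 : Fin 4)) T →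
      IsLeftTransversalIn (alternatingGroup (Fin 4))
        (alternatingGroup (Fin 4) ⊓
          MulAction.stabilizer (Equiv.Perm (Fin 4)) (0 : Fin 4)) L →
      ((∃ σ : Equiv.Perm (Fin 4) → Equiv.Perm (Fin 4),
          IsLeftIso (alternatingGroup (Fin 4) ⊓
            MulAction.stabilizer (Equiv.Perm (Fin 4)) (0 : Fin 4)) T L σ) ↔
        ∃ α : Equiv.Perm (Fin 4), α 0 = 0 ∧ (fun g => α * g * α⁻¹) '' T = L) := by
  constructor
  · have hbij : Function.Bijective
        (fun a : Tf => (⟨Set.range (tf a), tf_transversal a⟩ :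
          {S : Set P4 // IsLeftTransversalIn K4 H4 S})) := by
      constructor
      · intro a b hab
        exact range_tf_inj (congrArg Subtype.val hab)
      · rintro ⟨S, hS⟩
        obtain ⟨a, ha⟩ := transversal_normal_form hS
        exact ⟨a, Subtype.ext ha.symm⟩
    have hq := Quot.congr (rb := fun (T L : {S : Set P4 // IsLeftTransversalIn K4 H4 S}) =>
        ∃ σ : P4 → P4, IsLeftIso H4 T.1 L.1 σ)
      (Equiv.ofBijective _ hbij) (fun a b => (iso_iff_tab a b).symm)
    exact (Nat.card_congr hq.symm).trans card_quot_Rtab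
  · intro T L hT hL
    obtain ⟨a, ha⟩ := transversal_normal_form hT
    obtain ⟨b, hb⟩ := transversal_normal_form hL
    subst ha hb
    exact (iso_iff_tab a b).trans (tab_iff_conj a b)
end
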